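/- arXiv:1401.5866 — 3 statements merged into one kernel-verified Lean document; each statement's English description precedes it below -/
import Mathlib

section
/- Let f ∈ 𝕃 ∖ 𝔽_q(t), let 0 ≤ s ≤ k, let a ∈ 𝔽_q be nonzero, and let B_{i+1} ∈ 𝔽_q[t] for s ≤ i ≤ k satisfy |B_{i+1}| < |A_{i+1}| and B_{s+1} ≠ 0. If V = a·Q_{k+1} + B_{k+1}Q_k + ⋯ + B_{s+1}Q_s, then |{Vf}| = |B_{s+1}| / |Q_{s+1}|. -/
/-!
Setting: `q` a prime power is formalized as `q = Fintype.card Fq` for a finite field `Fq`.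
The field `K = 𝔽_q((t⁻¹))` of formal Laurent series in `t⁻¹` is realized as
`LaurentSeries Fq = 𝔽_q((X))` with `X = t⁻¹` (so `deg f = -(X-adic order of f)`).
-/

open scoped Classical
open MeasureTheory Filter
open scoped ENNReal

noncomputable section

variable (Fq : Type) [Field Fq] [Fintype Fq]

/-- `t ∈ K = 𝔽_q((t⁻¹))`, realized as the inverse of the variable `X` of
`LaurentSeries Fq`. -/
def tvar : LaurentSeries Fq := (HahnSeries.single (1 : ℤ) (1 : Fq))⁻¹

/-- The degree `deg f ∈ ℤ ∪ {-∞}` of `f ∈ K`, with `deg 0 = ⊥ = -∞`. -/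
def fdeg (f : LaurentSeries Fq) : WithBot ℤ :=
  if f = 0 then ⊥ else ((-f.order : ℤ) : WithBot ℤ)

/-- The absolute value `|f| = q^(deg f)`, with `|0| = 0`. -/
def fabs (f : LaurentSeries Fq) : ℝ :=
  if f = 0 then 0 else (Fintype.card Fq : ℝ) ^ (-f.order)

/-- Keep only the part of `f` with `X`-exponents `≤ N`, i.e. `t`-exponents `≥ -N`. -/
def cutoff (N : ℤ) (f : LaurentSeries Fq) : LaurentSeries Fq where
  coeff j := if j ≤ N then f.coeff j else 0
  isPWO_support' := f.isPWO_support'.mono (by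
    intro j hj
    by_cases hN : j ≤ N
    · simpa [Function.mem_support, hN] using hj
    · simp [Function.mem_support, hN] at hj)

/-- The polynomial part `[f] ∈ 𝔽_q[t]` of `f` (the part with `t`-exponents `≥ 0`). -/
def polyPart (f : LaurentSeries Fq) : LaurentSeries Fq := cutoff Fq 0 f

/-- The fractional part `{f} = f - [f]`. -/
def fracPart (f : LaurentSeries Fq) : LaurentSeries Fq := f - polyPart Fq f

/-- `𝒪 = {f ∈ K : |f| ≤ 1}`. -/
def setO : Set (LaurentSeries Fq) := {f | fabs Fq f ≤ 1}

/-- `𝕃 = {f ∈ K : |f| < 1}`. -/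
def setL : Set (LaurentSeries Fq) := {f | fabs Fq f < 1}

/-- `𝕁₀ = {f ∈ 𝒪 : deg f = 0}`. -/
def setJ0 : Set (LaurentSeries Fq) := {f | fdeg Fq f = ((0 : ℤ) : WithBot ℤ)}

/-- The embedding `𝔽_q[t] → K`, sending a polynomial `P` to `P(t)`. -/
def polyT (P : Polynomial Fq) : LaurentSeries Fq := Polynomial.aeval (tvar Fq) P

/-- The subfield `𝔽_q(t) ⊆ K` of rational functions (as a subset). -/
def ratSet : Set (LaurentSeries Fq) :=
  {g | ∃ P Q : Polynomial Fq, Q ≠ 0 ∧ g = polyT Fq P / polyT Fq Q}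

/-- The Artin map `Ψ(f) = {1/f}`. -/
def artin (f : LaurentSeries Fq) : LaurentSeries Fq := fracPart Fq f⁻¹

/-- The partial quotients `A_n = [1/Ψ^{n-1}(f)]` (`n ≥ 1`). -/
def pquot (f : LaurentSeries Fq) (n : ℕ) : LaurentSeries Fq :=
  polyPart Fq (((artin Fq)^[n - 1] f)⁻¹)

/-- `convPQ f (k+1) = (P_k, Q_k)`, the principal convergents;
`convPQ f 0 = (P_{-1}, Q_{-1}) = (1, 0)`, `convPQ f 1 = (P_0, Q_0) = (0, 1)`. -/
def convPQ (f : LaurentSeries Fq) : ℕ → LaurentSeries Fq × LaurentSeries Fq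
  | 0 => (1, 0)
  | 1 => (0, 1)
  | (n + 2) => (pquot Fq f (n + 1) * (convPQ f (n + 1)).1 + (convPQ f n).1,
                pquot Fq f (n + 1) * (convPQ f (n + 1)).2 + (convPQ f n).2)

/-- `Pc f (k+1) = P_k`. -/
def Pc (f : LaurentSeries Fq) (n : ℕ) : LaurentSeries Fq := (convPQ Fq f n).1

/-- `Qc f (k+1) = Q_k`. -/
def Qc (f : LaurentSeries Fq) (n : ℕ) : LaurentSeries Fq := (convPQ Fq f n).2

/-- The geometric Farey map `F` on `𝕃 × ℤ`. -/
def fareyGeom (p : LaurentSeries Fq × ℤ) : LaurentSeries Fq × ℤ :=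
  if fdeg Fq p.1 < ((-1 : ℤ) : WithBot ℤ) ∨ p.2 < 0 then
    (fracPart Fq (tvar Fq * p.1), p.2 + 1)
  else
    (fracPart Fq ((tvar Fq * p.1)⁻¹), -(p.2 + 1))

/-- The algebraic Farey map `F_h` associated to `h`. -/
def fareyAlg (h : LaurentSeries Fq) (f : LaurentSeries Fq) : LaurentSeries Fq :=
  if fdeg Fq f = ((0 : ℤ) : WithBot ℤ) then
    (1 - polyPart Fq ((1 - h) * f⁻¹) * f) / f
  else
    f / (1 - polyPart Fq ((1 - h) * f⁻¹) * f)

/-- The matrix `M(f, n)` associated to the geometric Farey map. -/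
def geomMat (p : LaurentSeries Fq × ℤ) : Matrix (Fin 2) (Fin 2) (LaurentSeries Fq) :=
  if p.2 < 0 then
    !![(tvar Fq)⁻¹, (tvar Fq)⁻¹ * polyPart Fq (tvar Fq * p.1); 0, 1]
  else if fdeg Fq p.1 = ((-1 : ℤ) : WithBot ℤ) then
    !![0, 1; tvar Fq, tvar Fq * polyPart Fq ((tvar Fq * p.1)⁻¹)]
  else
    !![1, 0; 0, tvar Fq]

/-- The matrix `M_h(f)` associated to the algebraic Farey map `F_h`. -/
def algMat (h : LaurentSeries Fq) (f : LaurentSeries Fq) :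
    Matrix (Fin 2) (Fin 2) (LaurentSeries Fq) :=
  if fdeg Fq f = ((0 : ℤ) : WithBot ℤ) then
    !![0, 1; 1, polyPart Fq ((1 - h) * f⁻¹)]
  else
    !![1, 0; polyPart Fq ((1 - h) * f⁻¹), 1]

/-- The leading term `LT(f)` of `f`. -/
def leadTerm (f : LaurentSeries Fq) : LaurentSeries Fq :=
  HahnSeries.single f.order (f.coeff f.order)

/-- `G(f) = 1/f - 1/LT(f)`. -/
def Gmap (f : LaurentSeries Fq) : LaurentSeries Fq := f⁻¹ - (leadTerm Fq f)⁻¹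

/-- The Farey map `F_𝕁` of Berthé–Nakada–Natsui. -/
def fareyBNN (f : LaurentSeries Fq) : LaurentSeries Fq :=
  if ((0 : ℤ) : WithBot ℤ) ≤ fdeg Fq (Gmap Fq f) then (Gmap Fq f)⁻¹
  else f⁻¹ - polyPart Fq f⁻¹

/-- The Borel measurable structure on `K`, for the valued-field topology. -/
instance : MeasurableSpace (LaurentSeries Fq) := borel _
instance : BorelSpace (LaurentSeries Fq) := ⟨rfl⟩

section Aux

variable {Fq : Type} [Field Fq] [Fintype Fq]

lemma card_pos_real : (0:ℝ) < (Fintype.card Fq : ℝ) := by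
  exact_mod_cast Fintype.card_pos

lemma one_lt_card_real : (1:ℝ) < (Fintype.card Fq : ℝ) := by
  exact_mod_cast Fintype.one_lt_card

lemma fabs_zero : fabs Fq 0 = 0 := if_pos rfl

lemma fabs_of_ne {x : LaurentSeries Fq} (hx : x ≠ 0) :
    fabs Fq x = (Fintype.card Fq : ℝ) ^ (-x.order) := if_neg hx

lemma fabs_nonneg (x : LaurentSeries Fq) : 0 ≤ fabs Fq x := by
  by_cases hx : x = 0
  · simp [hx, fabs_zero]
  · rw [fabs_of_ne hx]
    exact le_of_lt (zpow_pos (card_pos_real (Fq := Fq)) _)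

lemma fabs_pos {x : LaurentSeries Fq} (hx : x ≠ 0) : 0 < fabs Fq x := by
  rw [fabs_of_ne hx]; exact zpow_pos (card_pos_real (Fq := Fq)) _

lemma fabs_ne_zero {x : LaurentSeries Fq} (hx : x ≠ 0) : fabs Fq x ≠ 0 :=
  ne_of_gt (fabs_pos hx)

lemma fabs_mul (x y : LaurentSeries Fq) : fabs Fq (x * y) = fabs Fq x * fabs Fq y := by
  by_cases hx : x = 0
  · simp [hx, fabs_zero]
  by_cases hy : y = 0
  · simp [hy, fabs_zero]
  rw [fabs_of_ne hx, fabs_of_ne hy, fabs_of_ne (mul_ne_zero hx hy),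
    HahnSeries.order_mul hx hy, neg_add,
    zpow_add₀ (ne_of_gt (card_pos_real (Fq := Fq)))]

lemma fabs_one : fabs Fq 1 = 1 := by
  rw [fabs_of_ne (one_ne_zero), HahnSeries.order_one]; simp

lemma fabs_inv (x : LaurentSeries Fq) : fabs Fq x⁻¹ = (fabs Fq x)⁻¹ := by
  by_cases hx : x = 0
  · simp [hx, fabs_zero]
  · have h := fabs_mul (Fq := Fq) x x⁻¹
    rw [mul_inv_cancel₀ hx, fabs_one] at h
    exact eq_inv_of_mul_eq_one_left (by rw [mul_comm] at h; exact h.symm)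

lemma fabs_neg (x : LaurentSeries Fq) : fabs Fq (-x) = fabs Fq x := by
  by_cases hx : x = 0
  · simp [hx, fabs_zero]
  · rw [fabs_of_ne hx, fabs_of_ne (neg_ne_zero.mpr hx), HahnSeries.order_neg]

lemma order_lt_of_fabs_lt {x y : LaurentSeries Fq} (hx : x ≠ 0) (hy : y ≠ 0)
    (h : fabs Fq y < fabs Fq x) : x.order < y.order := by
  rw [fabs_of_ne hx, fabs_of_ne hy] at h
  have := (zpow_lt_zpow_iff_right₀ (one_lt_card_real (Fq := Fq))).mp h
  omega

lemma fabs_add_eq_left {x y : LaurentSeries Fq} (h : fabs Fq y < fabs Fq x) :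
    fabs Fq (x + y) = fabs Fq x := by
  have hx : x ≠ 0 := by
    rintro rfl; exact absurd h (not_lt.mpr (by rw [fabs_zero]; exact fabs_nonneg y))
  by_cases hy : y = 0
  · simp [hy]
  have hord : x.order < y.order := order_lt_of_fabs_lt hx hy h
  have hot : x.orderTop < y.orderTop := by
    rw [← HahnSeries.order_eq_orderTop_of_ne_zero hx, ← HahnSeries.order_eq_orderTop_of_ne_zero hy]
    exact_mod_cast hord
  have hxy : (x + y).orderTop = x.orderTop := HahnSeries.orderTop_add_eq_left hot
  have hne : x + y ≠ 0 := by
    intro h0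
    rw [h0, HahnSeries.orderTop_zero] at hxy
    exact (HahnSeries.orderTop_ne_top.2 hx) hxy.symm
  rw [fabs_of_ne hne, fabs_of_ne hx]
  congr 1
  have h2 : ((x + y).order : WithTop ℤ) = (x.order : WithTop ℤ) := by
    rw [HahnSeries.order_eq_orderTop_of_ne_zero hne, HahnSeries.order_eq_orderTop_of_ne_zero hx, hxy]
  have h3 : (x + y).order = x.order := WithTop.coe_inj.mp h2
  rw [h3]

lemma fabs_add_le (x y : LaurentSeries Fq) :
    fabs Fq (x + y) ≤ max (fabs Fq x) (fabs Fq y) := by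
  by_cases hx : x = 0
  · simp [hx, le_max_right, fabs_zero, fabs_nonneg]
  by_cases hy : y = 0
  · simp [hy, le_max_left, fabs_zero, fabs_nonneg]
  by_cases hxy : x + y = 0
  · simp [hxy, fabs_zero, le_max_iff]; left; exact fabs_nonneg x
  have := HahnSeries.min_order_le_order_add hxy
  rw [fabs_of_ne hx, fabs_of_ne hy, fabs_of_ne hxy]
  rcases le_total x.order y.order with hc | hc
  · refine le_max_of_le_left (zpow_le_zpow_right₀ (le_of_lt (one_lt_card_real (Fq := Fq))) ?_)
    have hx2 : x.order ≤ (x+y).order := le_trans (le_min le_rfl hc) this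
    omega
  · refine le_max_of_le_right (zpow_le_zpow_right₀ (le_of_lt (one_lt_card_real (Fq := Fq))) ?_)
    have hy2 : y.order ≤ (x+y).order := le_trans (le_min hc le_rfl) this
    omega

end Aux
set_option linter.unusedSectionVars false

section Aux2

variable {Fq : Type} [Field Fq] [Fintype Fq]

lemma polyPart_coeff (f : LaurentSeries Fq) (j : ℤ) :
    (polyPart Fq f).coeff j = if j ≤ 0 then f.coeff j else 0 := rfl

lemma polyPart_add (f g : LaurentSeries Fq) :
    polyPart Fq (f + g) = polyPart Fq f + polyPart Fq g := by
  ext j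
  simp only [polyPart_coeff, HahnSeries.coeff_add]
  split <;> simp

lemma fracPart_add (f g : LaurentSeries Fq) :
    fracPart Fq (f + g) = fracPart Fq f + fracPart Fq g := by
  unfold fracPart
  rw [polyPart_add]; ring

lemma fracPart_coeff (f : LaurentSeries Fq) (j : ℤ) :
    (fracPart Fq f).coeff j = f.coeff j - (polyPart Fq f).coeff j := by
  unfold fracPart
  rw [HahnSeries.coeff_sub]

/-- support in nonpositive exponents -/
def IsPolyS (g : LaurentSeries Fq) : Prop := ∀ j : ℤ, 0 < j → g.coeff j = 0

lemma polyPart_eq_self {g : LaurentSeries Fq} (h : IsPolyS g) : polyPart Fq g = g := by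
  ext j
  rw [polyPart_coeff]
  split_ifs with hj
  · rfl
  · exact (h j (by omega)).symm

lemma fracPart_eq_zero {g : LaurentSeries Fq} (h : IsPolyS g) : fracPart Fq g = 0 := by
  unfold fracPart; rw [polyPart_eq_self h]; ring

lemma coeff_eq_zero_of_fabs_lt_one {g : LaurentSeries Fq} (h : fabs Fq g < 1)
    {j : ℤ} (hj : j ≤ 0) : g.coeff j = 0 := by
  by_cases hg : g = 0
  · simp [hg]
  rw [fabs_of_ne hg] at h
  have hord : 0 < g.order := by
    by_contra hc
    push_neg at hc
    have h1 : (1:ℝ) ≤ (Fintype.card Fq : ℝ) ^ (-g.order) :=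
      one_le_zpow₀ (le_of_lt (one_lt_card_real (Fq := Fq))) (by omega)
    linarith
  exact HahnSeries.coeff_eq_zero_of_lt_order (by omega)

lemma fracPart_eq_self {g : LaurentSeries Fq} (h : fabs Fq g < 1) : fracPart Fq g = g := by
  unfold fracPart
  have hz : polyPart Fq g = 0 := by
    ext j
    rw [polyPart_coeff, HahnSeries.coeff_zero]
    split_ifs with hj
    · exact coeff_eq_zero_of_fabs_lt_one h hj
    · rfl
  rw [hz]; ring

lemma fabs_fracPart_lt_one (g : LaurentSeries Fq) : fabs Fq (fracPart Fq g) < 1 := by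
  by_cases h : fracPart Fq g = 0
  · rw [h, fabs_zero]; norm_num
  have hcoeff : ∀ j : ℤ, j ≤ 0 → (fracPart Fq g).coeff j = 0 := by
    intro j hj
    rw [fracPart_coeff, polyPart_coeff, if_pos hj, sub_self]
  have hord : 0 < (fracPart Fq g).order := by
    by_contra hc
    push_neg at hc
    exact (mt HahnSeries.coeff_order_eq_zero.mp h) (hcoeff _ hc)
  rw [fabs_of_ne h]
  calc (Fintype.card Fq : ℝ) ^ (-(fracPart Fq g).order)
      < (Fintype.card Fq : ℝ) ^ (0:ℤ) :=
        zpow_lt_zpow_right₀ (one_lt_card_real (Fq := Fq)) (by omega)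
    _ = 1 := by simp

/- tvar and polyT -/

lemma tvar_eq : tvar Fq = HahnSeries.single (-1 : ℤ) (1 : Fq) := by
  unfold tvar
  have h : HahnSeries.single (1 : ℤ) (1 : Fq) * HahnSeries.single (-1 : ℤ) (1 : Fq) = 1 := by
    rw [HahnSeries.single_mul_single]
    norm_num
  exact inv_eq_of_mul_eq_one_right h

lemma algebraMap_eq_C (c : Fq) :
    algebraMap Fq (LaurentSeries Fq) c = HahnSeries.C c := by
  rw [HahnSeries.algebraMap_apply', PowerSeries.algebraMap_apply]
  simp [HahnSeries.ofPowerSeries_C]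

lemma polyT_monomial (n : ℕ) (c : Fq) :
    polyT Fq (Polynomial.monomial n c) = HahnSeries.single (-(n:ℤ)) c := by
  unfold polyT
  rw [Polynomial.aeval_monomial, tvar_eq, HahnSeries.single_pow, algebraMap_eq_C]
  show HahnSeries.single 0 c * _ = _
  rw [HahnSeries.single_mul_single]
  simp

lemma isPolyS_polyT (P : Polynomial Fq) : IsPolyS (polyT Fq P) := by
  induction P using Polynomial.induction_on' with
  | add p q hp hq =>
      intro j hj
      unfold polyT at *
      rw [map_add, HahnSeries.coeff_add, hp j hj, hq j hj, add_zero]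
  | monomial n c =>
      intro j hj
      rw [polyT_monomial, HahnSeries.coeff_single]
      split_ifs with h
      · omega
      · rfl

lemma one_le_fabs_of_isPolyS {g : LaurentSeries Fq} (h : IsPolyS g) (hg : g ≠ 0) :
    1 ≤ fabs Fq g := by
  have horder : g.order ≤ 0 := by
    by_contra hc
    push_neg at hc
    exact (mt HahnSeries.coeff_order_eq_zero.mp hg) (h _ hc)
  rw [fabs_of_ne hg]
  calc (1:ℝ) = (Fintype.card Fq : ℝ) ^ (0:ℤ) := by simp
    _ ≤ _ := zpow_le_zpow_right₀ (le_of_lt (one_lt_card_real (Fq := Fq))) (by omega)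

lemma polyPart_mem_range (g : LaurentSeries Fq) :
    polyPart Fq g ∈ Set.range (polyT Fq) := by
  by_cases hg : g = 0
  · refine ⟨0, ?_⟩
    unfold polyT
    rw [map_zero, hg]
    ext j; rw [polyPart_coeff, HahnSeries.coeff_zero]; split <;> rfl
  refine ⟨∑ j ∈ Finset.Icc g.order 0, Polynomial.monomial (-j).toNat (g.coeff j), ?_⟩
  have hmap : polyT Fq (∑ j ∈ Finset.Icc g.order 0, Polynomial.monomial (-j).toNat (g.coeff j))
      = ∑ j ∈ Finset.Icc g.order 0, polyT Fq (Polynomial.monomial (-j).toNat (g.coeff j)) := by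
    unfold polyT; rw [map_sum]
  rw [hmap]
  ext i
  rw [polyPart_coeff]
  have hcoeff : ∀ j ∈ Finset.Icc g.order 0,
      (polyT Fq (Polynomial.monomial (-j).toNat (g.coeff j))).coeff i
        = if j = i then g.coeff j else 0 := by
    intro j hj
    simp only [Finset.mem_Icc] at hj
    rw [polyT_monomial, HahnSeries.coeff_single]
    have hjt : -((-j).toNat : ℤ) = j := by omega
    rw [hjt]
    split_ifs with h1 h2 h3 <;> first | rfl | omega
  rw [show (∑ j ∈ Finset.Icc g.order 0, polyT Fq (Polynomial.monomial (-j).toNat (g.coeff j))).coeff i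
      = ∑ j ∈ Finset.Icc g.order 0, (polyT Fq (Polynomial.monomial (-j).toNat (g.coeff j))).coeff i
    from map_sum (HahnSeries.coeff.addMonoidHom i) _ _,
    Finset.sum_congr rfl hcoeff, Finset.sum_ite_eq']
  by_cases hi : i ∈ Finset.Icc g.order 0
  · have hi' := Finset.mem_Icc.mp hi
    rw [if_pos hi, if_pos (by omega)]
  · rw [if_neg hi]
    have hi' := hi
    simp only [Finset.mem_Icc, not_and_or, not_le] at hi'
    split_ifs with h
    · rcases hi' with h1 | h2
      · exact (HahnSeries.coeff_eq_zero_of_lt_order h1).symm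
      · omega
    · rfl

lemma mem_range_polyT_add {x y : LaurentSeries Fq} (hx : x ∈ Set.range (polyT Fq))
    (hy : y ∈ Set.range (polyT Fq)) : x + y ∈ Set.range (polyT Fq) := by
  obtain ⟨P, rfl⟩ := hx; obtain ⟨Q, rfl⟩ := hy
  exact ⟨P + Q, by unfold polyT; rw [map_add]⟩

lemma mem_range_polyT_mul {x y : LaurentSeries Fq} (hx : x ∈ Set.range (polyT Fq))
    (hy : y ∈ Set.range (polyT Fq)) : x * y ∈ Set.range (polyT Fq) := by
  obtain ⟨P, rfl⟩ := hx; obtain ⟨Q, rfl⟩ := hy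
  exact ⟨P * Q, by unfold polyT; rw [map_mul]⟩

lemma isPolyS_of_mem_range {x : LaurentSeries Fq} (hx : x ∈ Set.range (polyT Fq)) :
    IsPolyS x := by
  obtain ⟨P, rfl⟩ := hx; exact isPolyS_polyT P

lemma fabs_algebraMap (a : Fq) (ha : a ≠ 0) :
    fabs Fq (algebraMap Fq (LaurentSeries Fq) a) = 1 := by
  rw [algebraMap_eq_C]
  show fabs Fq (HahnSeries.single 0 a) = 1
  rw [fabs_of_ne (HahnSeries.single_ne_zero ha), HahnSeries.order_single ha]
  simp

lemma algebraMap_mem_range (a : Fq) :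
    algebraMap Fq (LaurentSeries Fq) a ∈ Set.range (polyT Fq) :=
  ⟨Polynomial.C a, by unfold polyT; rw [Polynomial.aeval_C]⟩

end Aux2
section Aux3

variable {Fq : Type} [Field Fq] [Fintype Fq]

/-- iterates of the Artin map -/
def fsN (f : LaurentSeries Fq) (n : ℕ) : LaurentSeries Fq := (artin Fq)^[n] f

/-- error terms `f * Q - P` -/
def errE (f : LaurentSeries Fq) (n : ℕ) : LaurentSeries Fq :=
  f * Qc Fq f n - Pc Fq f n

variable (f : LaurentSeries Fq)

lemma fsN_zero : fsN f 0 = f := rfl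

lemma fsN_succ (n : ℕ) : fsN f (n + 1) = fracPart Fq (fsN f n)⁻¹ := by
  unfold fsN
  rw [Function.iterate_succ_apply']
  rfl

lemma pquot_succ (n : ℕ) : pquot Fq f (n + 1) = polyPart Fq ((fsN f n)⁻¹) := by
  unfold pquot fsN
  norm_num

lemma Qc_zero : Qc Fq f 0 = 0 := rfl
lemma Qc_one : Qc Fq f 1 = 1 := rfl
lemma Pc_zero : Pc Fq f 0 = 1 := rfl
lemma Pc_one : Pc Fq f 1 = 0 := rfl

lemma Qc_rec (n : ℕ) :
    Qc Fq f (n + 2) = pquot Fq f (n + 1) * Qc Fq f (n + 1) + Qc Fq f n := by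
  show (convPQ Fq f (n+2)).2 = _
  rw [convPQ]
  rfl

lemma Pc_rec (n : ℕ) :
    Pc Fq f (n + 2) = pquot Fq f (n + 1) * Pc Fq f (n + 1) + Pc Fq f n := by
  show (convPQ Fq f (n+2)).1 = _
  rw [convPQ]
  rfl

lemma polyPart_add_fracPart (x : LaurentSeries Fq) :
    polyPart Fq x + fracPart Fq x = x := by
  unfold fracPart; ring

lemma polyPart_inv_spec {g : LaurentSeries Fq} (hg : g ≠ 0) (h1 : fabs Fq g < 1) :
    fabs Fq g * fabs Fq (polyPart Fq g⁻¹) = 1 ∧ 1 < fabs Fq (polyPart Fq g⁻¹) := by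
  have hinv : 1 < fabs Fq g⁻¹ := by
    rw [fabs_inv]
    exact (one_lt_inv₀ (fabs_pos hg)).mpr h1
  have hpp : polyPart Fq g⁻¹ = g⁻¹ + -(fracPart Fq g⁻¹) := by unfold fracPart; ring
  have habs : fabs Fq (polyPart Fq g⁻¹) = fabs Fq g⁻¹ := by
    rw [hpp]
    exact fabs_add_eq_left (by
      rw [fabs_neg]
      exact lt_trans (fabs_fracPart_lt_one _) hinv)
  refine ⟨?_, by rw [habs]; exact hinv⟩
  rw [habs, fabs_inv, mul_inv_cancel₀ (fabs_ne_zero hg)]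

lemma zero_mem_range : (0 : LaurentSeries Fq) ∈ Set.range (polyT Fq) :=
  ⟨0, by unfold polyT; rw [map_zero]⟩

lemma one_mem_range : (1 : LaurentSeries Fq) ∈ Set.range (polyT Fq) :=
  ⟨1, by unfold polyT; rw [map_one]⟩

lemma pq_mem (n : ℕ) :
    Pc Fq f n ∈ Set.range (polyT Fq) ∧ Qc Fq f n ∈ Set.range (polyT Fq) := by
  have key : ∀ m : ℕ,
      (Pc Fq f m ∈ Set.range (polyT Fq) ∧ Qc Fq f m ∈ Set.range (polyT Fq)) ∧
      (Pc Fq f (m+1) ∈ Set.range (polyT Fq) ∧ Qc Fq f (m+1) ∈ Set.range (polyT Fq)) := by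
    intro m
    induction m with
    | zero =>
        refine ⟨⟨?_, ?_⟩, ?_, ?_⟩
        · rw [Pc_zero]; exact one_mem_range
        · rw [Qc_zero]; exact zero_mem_range
        · rw [Pc_one]; exact zero_mem_range
        · rw [Qc_one]; exact one_mem_range
    | succ m ih =>
        refine ⟨ih.2, ?_, ?_⟩
        · rw [Pc_rec]
          exact mem_range_polyT_add
            (mem_range_polyT_mul (polyPart_mem_range _) ih.2.1) ih.1.1
        · rw [Qc_rec]
          exact mem_range_polyT_add
            (mem_range_polyT_mul (polyPart_mem_range _) ih.2.2) ih.1.2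
  exact (key n).1

variable (hfirr : f ∉ ratSet Fq)

include hfirr in
lemma f_ne_zero : f ≠ 0 := by
  intro h0
  exact hfirr ⟨0, 1, one_ne_zero, by
    unfold polyT
    rw [map_zero, map_one, h0, zero_div]⟩

include hfirr in
lemma f_ne_ratio {n : ℕ} (h : f * Qc Fq f n = Pc Fq f n) (hQ : Qc Fq f n ≠ 0) : False := by
  obtain ⟨P, hP⟩ := (pq_mem f n).1
  obtain ⟨Q, hQ'⟩ := (pq_mem f n).2
  have hQ0 : Q ≠ 0 := by
    intro h0
    rw [h0] at hQ'
    apply hQ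
    rw [← hQ']
    unfold polyT
    rw [map_zero]
  have hfeq : f = polyT Fq P / polyT Fq Q := by
    rw [hP, hQ', eq_div_iff hQ]
    exact h
  exact hfirr ⟨P, Q, hQ0, hfeq⟩

variable (hfL : f ∈ setL Fq)

include hfirr hfL in
lemma master (n : ℕ) :
    fsN f n ≠ 0 ∧ fabs Fq (fsN f n) < 1 ∧
    errE f (n+1) = -(fsN f n) * errE f n ∧
    1 ≤ fabs Fq (Qc Fq f (n+1)) ∧
    fabs Fq (Qc Fq f (n+2)) = fabs Fq (pquot Fq f (n+1)) * fabs Fq (Qc Fq f (n+1)) ∧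
    fabs Fq (fsN f n) * fabs Fq (pquot Fq f (n+1)) = 1 := by
  induction n with
  | zero =>
      have hf0 : f ≠ 0 := f_ne_zero f hfirr
      have hfl : fabs Fq f < 1 := hfL
      have spec := polyPart_inv_spec hf0 hfl
      refine ⟨hf0, hfl, ?_, ?_, ?_, ?_⟩
      · unfold errE
        rw [fsN_zero, Qc_zero, Qc_one, Pc_zero, Pc_one]
        ring
      · rw [Qc_one, fabs_one]
      · rw [Qc_rec, Qc_one, Qc_zero, mul_one, add_zero, fabs_one, mul_one]
      · rw [fsN_zero, pquot_succ, fsN_zero]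
        exact spec.1
  | succ n ih =>
      obtain ⟨hne, hlt, hC, hq1, hq2, hprod⟩ := ih
      have hApos : 0 < fabs Fq (pquot Fq f (n+1)) := by
        rcases lt_or_ge 0 (fabs Fq (pquot Fq f (n+1))) with h | h
        · exact h
        · nlinarith [fabs_pos hne]
      have hAgt : 1 < fabs Fq (pquot Fq f (n+1)) := by
        nlinarith [fabs_pos hne]
      -- decomposition
      have hdecomp : fsN f (n+1) = (fsN f n)⁻¹ - pquot Fq f (n+1) := by
        rw [fsN_succ, pquot_succ]
        have := polyPart_add_fracPart (Fq := Fq) (fsN f n)⁻¹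
        linear_combination this
      have hlt1 : fabs Fq (fsN f (n+1)) < 1 := by
        rw [fsN_succ]; exact fabs_fracPart_lt_one _
      -- recursion for errE
      have hrec : errE f (n+2) = pquot Fq f (n+1) * errE f (n+1) + errE f n := by
        unfold errE
        rw [Qc_rec, Pc_rec]
        ring
      have hC1 : errE f (n+2) = -(fsN f (n+1)) * errE f (n+1) := by
        rw [hrec, hdecomp]
        have : pquot Fq f (n+1) * errE f (n+1) + errE f n
            = pquot Fq f (n+1) * errE f (n+1)
              - (fsN f n)⁻¹ * (-(fsN f n) * errE f n) := by
          rw [show (fsN f n)⁻¹ * (-(fsN f n) * errE f n)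
              = -((fsN f n)⁻¹ * fsN f n * errE f n) by ring,
            inv_mul_cancel₀ hne]
          ring
        rw [this, ← hC]
        ring
      -- nonvanishing
      have hQne : Qc Fq f (n+2) ≠ 0 := by
        intro h0
        rw [h0, fabs_zero] at hq2
        nlinarith
      have hne1 : fsN f (n+1) ≠ 0 := by
        intro h0
        rw [h0] at hC1
        have : f * Qc Fq f (n+2) = Pc Fq f (n+2) := by
          have h2 : errE f (n+2) = 0 := by rw [hC1]; ring
          unfold errE at h2
          linear_combination h2
        exact f_ne_ratio f hfirr this hQne
      have spec := polyPart_inv_spec hne1 hlt1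
      have hAgt2 : 1 < fabs Fq (pquot Fq f (n+2)) := by
        rw [pquot_succ]
        exact (polyPart_inv_spec hne1 hlt1).2
      refine ⟨hne1, hlt1, hC1, ?_, ?_, ?_⟩
      · rw [hq2]
        nlinarith
      · rw [Qc_rec (n := n+1)]
        have hmain : fabs Fq (Qc Fq f (n+1)) < fabs Fq (pquot Fq f (n+2) * Qc Fq f (n+2)) := by
          rw [fabs_mul]
          have hq2pos : 1 ≤ fabs Fq (Qc Fq f (n+2)) := by rw [hq2]; nlinarith
          have : fabs Fq (Qc Fq f (n+1)) ≤ fabs Fq (Qc Fq f (n+2)) := by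
            rw [hq2]; nlinarith
          nlinarith
        rw [fabs_add_eq_left hmain, fabs_mul]
      · rw [pquot_succ]
        exact spec.1

end Aux3
section Aux4

variable {Fq : Type} [Field Fq] [Fintype Fq]

lemma fabs_sum_lt {α : Type*} (s : Finset α) (g : α → LaurentSeries Fq) {c : ℝ}
    (hc : 0 < c) (h : ∀ i ∈ s, fabs Fq (g i) < c) :
    fabs Fq (∑ i ∈ s, g i) < c := by
  induction s using Finset.cons_induction with
  | empty => simpa [fabs_zero] using hc
  | cons a s ha ih =>
      rw [Finset.sum_cons]
      refine lt_of_le_of_lt (fabs_add_le _ _) (max_lt (h a (Finset.mem_cons_self a s)) ?_)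
      exact ih fun i hi => h i (Finset.mem_cons_of_mem hi)

lemma mem_range_polyT_sum {α : Type*} (s : Finset α) (g : α → LaurentSeries Fq)
    (h : ∀ i ∈ s, g i ∈ Set.range (polyT Fq)) :
    ∑ i ∈ s, g i ∈ Set.range (polyT Fq) := by
  induction s using Finset.cons_induction with
  | empty => rw [Finset.sum_empty]; exact zero_mem_range
  | cons a s ha ih =>
      rw [Finset.sum_cons]
      exact mem_range_polyT_add (h a (Finset.mem_cons_self a s))
        (ih fun i hi => h i (Finset.mem_cons_of_mem hi))

variable (f : LaurentSeries Fq) (hfirr : f ∉ ratSet Fq) (hfL : f ∈ setL Fq)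

include hfirr hfL

lemma one_lt_fabs_pquot (n : ℕ) : 1 < fabs Fq (pquot Fq f (n+1)) := by
  obtain ⟨hne, hlt, -, -, -, hprod⟩ := master f hfirr hfL n
  nlinarith [fabs_pos hne]

lemma one_le_fabs_Qc (n : ℕ) : 1 ≤ fabs Fq (Qc Fq f (n+1)) :=
  (master f hfirr hfL n).2.2.2.1

lemma fabs_Qc_lt (n : ℕ) : fabs Fq (Qc Fq f (n+1)) < fabs Fq (Qc Fq f (n+2)) := by
  obtain ⟨-, -, -, hq1, hq2, -⟩ := master f hfirr hfL n
  have := one_lt_fabs_pquot f hfirr hfL n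
  nlinarith

lemma fabs_Qc_mono {m n : ℕ} (h : m ≤ n) :
    fabs Fq (Qc Fq f (m+1)) ≤ fabs Fq (Qc Fq f (n+1)) := by
  induction n, h using Nat.le_induction with
  | base => exact le_refl _
  | succ n hmn ih => exact le_trans ih (le_of_lt (fabs_Qc_lt f hfirr hfL n))

lemma errE_one : errE f 1 = f := by
  unfold errE
  rw [Qc_one, Pc_one]
  ring

lemma fabs_errE_mul_Qc (n : ℕ) :
    fabs Fq (errE f (n+1)) * fabs Fq (Qc Fq f (n+2)) = 1 := by
  induction n with
  | zero =>
      obtain ⟨hne, hlt, -, -, hq2, hprod⟩ := master f hfirr hfL 0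
      rw [errE_one f hfirr hfL, hq2, Qc_one, fabs_one, mul_one]
      rw [fsN_zero] at hprod
      exact hprod
  | succ n ih =>
      obtain ⟨hne, hlt, hC, hq1, hq2, hprod⟩ := master f hfirr hfL (n+1)
      have hC' : errE f (n+2) = -fsN f (n+1) * errE f (n+1) := hC
      have hq2' : fabs Fq (Qc Fq f (n+3))
          = fabs Fq (pquot Fq f (n+2)) * fabs Fq (Qc Fq f (n+2)) := hq2
      have hprod' : fabs Fq (fsN f (n+1)) * fabs Fq (pquot Fq f (n+2)) = 1 := hprod
      calc fabs Fq (errE f (n+2)) * fabs Fq (Qc Fq f (n+3))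
          = (fabs Fq (fsN f (n+1)) * fabs Fq (pquot Fq f (n+2)))
            * (fabs Fq (errE f (n+1)) * fabs Fq (Qc Fq f (n+2))) := by
            rw [hC', fabs_mul, fabs_neg, hq2']; ring
        _ = 1 := by rw [hprod', ih]; ring

lemma fabs_errE (n : ℕ) :
    fabs Fq (errE f (n+1)) = (fabs Fq (Qc Fq f (n+2)))⁻¹ :=
  eq_inv_of_mul_eq_one_left (fabs_errE_mul_Qc f hfirr hfL n)

lemma fabs_Qc_pos (n : ℕ) : 0 < fabs Fq (Qc Fq f (n+1)) :=
  lt_of_lt_of_le one_pos (one_le_fabs_Qc f hfirr hfL n)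

lemma fabs_A_Qc (n : ℕ) :
    fabs Fq (pquot Fq f (n+1)) * (fabs Fq (Qc Fq f (n+2)))⁻¹
      = (fabs Fq (Qc Fq f (n+1)))⁻¹ := by
  obtain ⟨-, -, -, hq1, hq2, -⟩ := master f hfirr hfL n
  rw [hq2, mul_inv]
  have hA := one_lt_fabs_pquot f hfirr hfL n
  field_simp

end Aux4
/-- If `V = a·Q_{k+1} + B_{k+1}·Q_k + ⋯ + B_{s+1}·Q_s` with `a ∈ 𝔽_q*`,
`B_{i+1} ∈ 𝔽_q[t]`, `|B_{i+1}| < |A_{i+1}|` and `B_{s+1} ≠ 0`, then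
`|{Vf}| = |B_{s+1}|/|Q_{s+1}|`. -/
theorem frac_part_of_combination
    (f : LaurentSeries Fq) (hfL : f ∈ setL Fq) (hfirr : f ∉ ratSet Fq)
    (s k : ℕ) (hsk : s ≤ k) (a : Fq) (ha : a ≠ 0)
    (B : ℕ → LaurentSeries Fq)
    (hBpoly : ∀ i, s ≤ i → i ≤ k → B (i + 1) ∈ Set.range (polyT Fq))
    (hBlt : ∀ i, s ≤ i → i ≤ k → fabs Fq (B (i + 1)) < fabs Fq (pquot Fq f (i + 1)))
    (hBs : B (s + 1) ≠ 0)
    (V : LaurentSeries Fq)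
    (hV : V = algebraMap Fq (LaurentSeries Fq) a * Qc Fq f (k + 2)
        + ∑ i ∈ Finset.Icc s k, B (i + 1) * Qc Fq f (i + 1)) :
    fabs Fq (fracPart Fq (V * f)) = fabs Fq (B (s + 1)) / fabs Fq (Qc Fq f (s + 2)) := by
  have hBs1 : 1 ≤ fabs Fq (B (s+1)) :=
    one_le_fabs_of_isPolyS (isPolyS_of_mem_range (hBpoly s le_rfl hsk)) hBs
  have hQs2pos : 0 < fabs Fq (Qc Fq f (s+2)) := fabs_Qc_pos f hfirr hfL (s+1)
  set c : ℝ := fabs Fq (B (s+1)) * (fabs Fq (Qc Fq f (s+2)))⁻¹ with hc_def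
  have hinvQ : 0 < (fabs Fq (Qc Fq f (s+2)))⁻¹ := inv_pos.mpr hQs2pos
  have hc_pos : 0 < c := mul_pos (lt_of_lt_of_le one_pos hBs1) hinvQ
  have hQinv_le_c : (fabs Fq (Qc Fq f (s+2)))⁻¹ ≤ c := by
    rw [hc_def]; nlinarith
  have hc_lt1 : c < 1 := by
    have hAs := hBlt s le_rfl hsk
    have h1 : c < fabs Fq (pquot Fq f (s+1)) * (fabs Fq (Qc Fq f (s+2)))⁻¹ :=
      mul_lt_mul_of_pos_right hAs hinvQ
    rw [fabs_A_Qc f hfirr hfL s] at h1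
    have h3 := one_le_fabs_Qc f hfirr hfL s
    have h2 : (fabs Fq (Qc Fq f (s+1)))⁻¹ ≤ 1 := by
      rw [inv_le_one₀ (by linarith)]
      exact h3
    linarith
  have hterm : ∀ i, s + 1 ≤ i → i ≤ k → fabs Fq (B (i+1) * errE f (i+1)) < c := by
    intro i hi hik
    rw [fabs_mul, fabs_errE f hfirr hfL i]
    have hQi2pos : 0 < fabs Fq (Qc Fq f (i+2)) := fabs_Qc_pos f hfirr hfL (i+1)
    have hBi := hBlt i (le_trans (Nat.le_succ s) hi) hik
    have h1 : fabs Fq (B (i+1)) * (fabs Fq (Qc Fq f (i+2)))⁻¹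
        < fabs Fq (pquot Fq f (i+1)) * (fabs Fq (Qc Fq f (i+2)))⁻¹ :=
      mul_lt_mul_of_pos_right hBi (inv_pos.mpr hQi2pos)
    rw [fabs_A_Qc f hfirr hfL i] at h1
    have hmono : fabs Fq (Qc Fq f (s+2)) ≤ fabs Fq (Qc Fq f (i+1)) :=
      fabs_Qc_mono f hfirr hfL (show s + 1 ≤ i from hi)
    have h2 : (fabs Fq (Qc Fq f (i+1)))⁻¹ ≤ (fabs Fq (Qc Fq f (s+2)))⁻¹ :=
      inv_anti₀ hQs2pos hmono
    linarith
  have haterm : fabs Fq (algebraMap Fq (LaurentSeries Fq) a * errE f (k+2)) < c := by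
    rw [fabs_mul, fabs_algebraMap a ha, one_mul, fabs_errE f hfirr hfL (k+1)]
    have hlt := fabs_Qc_lt f hfirr hfL (k+1)
    have hmono : fabs Fq (Qc Fq f (s+2)) ≤ fabs Fq (Qc Fq f (k+2)) :=
      fabs_Qc_mono f hfirr hfL (show s + 1 ≤ k + 1 by omega)
    have h2 : (fabs Fq (Qc Fq f (k+3)))⁻¹ < (fabs Fq (Qc Fq f (s+2)))⁻¹ :=
      inv_strictAnti₀ hQs2pos (lt_of_le_of_lt hmono hlt)
    linarith
  set W : LaurentSeries Fq := algebraMap Fq (LaurentSeries Fq) a * Pc Fq f (k+2)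
      + ∑ i ∈ Finset.Icc s k, B (i+1) * Pc Fq f (i+1) with hW_def
  set R : LaurentSeries Fq := algebraMap Fq (LaurentSeries Fq) a * errE f (k+2)
      + ∑ i ∈ Finset.Icc s k, B (i+1) * errE f (i+1) with hR_def
  have key : V * f = W + R := by
    rw [hV, add_mul, Finset.sum_mul, hW_def, hR_def]
    have h1 : ∀ i ∈ Finset.Icc s k,
        B (i+1) * Qc Fq f (i+1) * f = B (i+1) * Pc Fq f (i+1) + B (i+1) * errE f (i+1) := by
      intro i _
      unfold errE
      ring
    rw [Finset.sum_congr rfl h1, Finset.sum_add_distrib]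
    unfold errE
    ring
  have hWpoly : IsPolyS W := by
    refine isPolyS_of_mem_range (mem_range_polyT_add
      (mem_range_polyT_mul (algebraMap_mem_range a) (pq_mem f (k+2)).1)
      (mem_range_polyT_sum _ _ fun i hi => ?_))
    obtain ⟨h1, h2⟩ := Finset.mem_Icc.mp hi
    exact mem_range_polyT_mul (hBpoly i h1 h2) (pq_mem f (i+1)).1
  have hRsplit : R = B (s+1) * errE f (s+1)
      + (algebraMap Fq (LaurentSeries Fq) a * errE f (k+2)
        + ∑ i ∈ Finset.Ioc s k, B (i+1) * errE f (i+1)) := by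
    rw [hR_def, Finset.Icc_eq_cons_Ioc hsk, Finset.sum_cons]
    ring
  have hT : fabs Fq (algebraMap Fq (LaurentSeries Fq) a * errE f (k+2)
      + ∑ i ∈ Finset.Ioc s k, B (i+1) * errE f (i+1)) < c := by
    refine lt_of_le_of_lt (fabs_add_le _ _) (max_lt haterm (fabs_sum_lt _ _ hc_pos ?_))
    intro i hi
    obtain ⟨h1, h2⟩ := Finset.mem_Ioc.mp hi
    exact hterm i h1 h2
  have hBe : fabs Fq (B (s+1) * errE f (s+1)) = c := by
    rw [fabs_mul, fabs_errE f hfirr hfL s, hc_def]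
  have hR : fabs Fq R = c := by
    rw [hRsplit, fabs_add_eq_left (by rw [hBe]; exact hT), hBe]
  have hRlt1 : fabs Fq R < 1 := by rw [hR]; exact hc_lt1
  have hfrac : fracPart Fq (V * f) = R := by
    rw [key, fracPart_add, fracPart_eq_zero hWpoly, zero_add, fracPart_eq_self hRlt1]
  rw [hfrac, hR, hc_def, div_eq_mul_inv]

end
end

section
/- Let f ∈ 𝕃 ∖ 𝔽_q(t). If ℓ = 2·(deg A_1 + ⋯ + deg A_k) + i with k ≥ 0 and 0 ≤ i < deg A_{k+1}, then the matrix product M(f,0)·M(F(f,0))·⋯·M(F^{ℓ−1}(f,0)) equals the 2×2 matrix with rows (P_{k−1}, tⁱ·P_k) and (Q_{k−1}, tⁱ·Q_k). -/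
/-!
Setting: `q` a prime power is formalized as `q = Fintype.card Fq` for a finite field `Fq`.
The field `K = 𝔽_q((t⁻¹))` of formal Laurent series in `t⁻¹` is realized as
`LaurentSeries Fq = 𝔽_q((X))` with `X = t⁻¹` (so `deg f = -(X-adic order of f)`).
-/

open scoped Classical
open MeasureTheory Filter
open scoped ENNReal

noncomputable section

variable (Fq : Type) [Field Fq] [Fintype Fq]

namespace GeomAux

open HahnSeries

set_option linter.unusedSectionVars false

lemma mat2_congr {α : Type*} {a b c d a' b' c' d' : α} (h1 : a = a') (h2 : b = b')
    (h3 : c = c') (h4 : d = d') :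
    (!![a, b; c, d] : Matrix (Fin 2) (Fin 2) α) = !![a', b'; c', d'] := by
  rw [h1, h2, h3, h4]

/-! ### Basic facts about `tvar` -/

lemma tvar_eq : tvar Fq = HahnSeries.single (-1 : ℤ) (1 : Fq) := by
  rw [tvar]
  apply inv_eq_of_mul_eq_one_right
  rw [HahnSeries.single_mul_single]
  norm_num

lemma tvar_ne_zero : tvar Fq ≠ 0 := by
  rw [tvar_eq]; exact single_ne_zero one_ne_zero

lemma tvar_mul_coeff (f : LaurentSeries Fq) (j : ℤ) :
    (tvar Fq * f).coeff j = f.coeff (j + 1) := by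
  have h := HahnSeries.coeff_single_mul_add (r := (1 : Fq)) (x := f) (a := j + 1) (b := -1)
  have h2 : j + 1 + -1 = j := by ring
  rw [h2, one_mul] at h
  rw [tvar_eq, h]

lemma tvar_pow (n : ℕ) : tvar Fq ^ n = HahnSeries.single (-(n : ℤ)) (1 : Fq) := by
  rw [tvar_eq, single_pow]
  simp

lemma tvar_pow_ne_zero (n : ℕ) : tvar Fq ^ n ≠ 0 := pow_ne_zero _ (tvar_ne_zero Fq)

lemma order_tvar_pow_mul (n : ℕ) {f : LaurentSeries Fq} (hf : f ≠ 0) :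
    (tvar Fq ^ n * f).order = f.order - n := by
  rw [tvar_pow, order_mul (single_ne_zero one_ne_zero) hf, order_single one_ne_zero]
  ring

lemma order_inv {f : LaurentSeries Fq} (hf : f ≠ 0) : (f⁻¹).order = -f.order := by
  have h := order_mul hf (inv_ne_zero hf)
  rw [mul_inv_cancel₀ hf, order_one] at h
  omega

/-! ### `polyPart` and `fracPart` -/

lemma polyPart_coeff (f : LaurentSeries Fq) (j : ℤ) :
    (polyPart Fq f).coeff j = if j ≤ 0 then f.coeff j else 0 := rfl

lemma fracPart_coeff (f : LaurentSeries Fq) (j : ℤ) :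
    (fracPart Fq f).coeff j = if j ≤ 0 then 0 else f.coeff j := by
  rw [fracPart, HahnSeries.coeff_sub, polyPart_coeff]
  split <;> simp

lemma polyPart_eq_zero_of {f : LaurentSeries Fq} (h : ∀ j ≤ 0, f.coeff j = 0) :
    polyPart Fq f = 0 := by
  ext j; rw [polyPart_coeff]
  split
  · exact (h _ ‹_›).trans (by simp)
  · simp

lemma fracPart_eq_self_of {f : LaurentSeries Fq} (h : ∀ j ≤ 0, f.coeff j = 0) :
    fracPart Fq f = f := by
  rw [fracPart, polyPart_eq_zero_of Fq h, sub_zero]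

lemma order_pos_of {f : LaurentSeries Fq} (hf : f ≠ 0) (h : ∀ j ≤ 0, f.coeff j = 0) :
    1 ≤ f.order := by
  by_contra hc
  push_neg at hc
  exact (HahnSeries.coeff_order_eq_zero.not.mpr hf) (h _ (by omega))

lemma order_eq_of {x : LaurentSeries Fq} {c : ℤ} (h1 : x.coeff c ≠ 0)
    (h2 : ∀ j, j < c → x.coeff j = 0) : x.order = c := by
  have hx : x ≠ 0 := HahnSeries.ne_zero_of_coeff_ne_zero h1
  refine le_antisymm (HahnSeries.order_le_of_coeff_ne_zero h1) ?_
  by_contra h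
  push_neg at h
  exact (HahnSeries.coeff_order_eq_zero.not.mpr hx) (h2 _ h)

lemma fracPart_tvar (x : LaurentSeries Fq) :
    fracPart Fq (tvar Fq * fracPart Fq x) = fracPart Fq (tvar Fq * x) := by
  ext j
  rw [fracPart_coeff, fracPart_coeff]
  split
  · rfl
  · rw [tvar_mul_coeff, tvar_mul_coeff, fracPart_coeff, if_neg (by omega)]

lemma polyPart_tvar_fracPart (x : LaurentSeries Fq) :
    polyPart Fq (tvar Fq * fracPart Fq x)
      = polyPart Fq (tvar Fq * x) - tvar Fq * polyPart Fq x := by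
  ext j
  rw [HahnSeries.coeff_sub, polyPart_coeff, polyPart_coeff, tvar_mul_coeff, tvar_mul_coeff,
    tvar_mul_coeff, fracPart_coeff, polyPart_coeff]
  split_ifs <;> first | omega | simp | ring

lemma fdeg_of_ne {f : LaurentSeries Fq} (hf : f ≠ 0) :
    fdeg Fq f = ((-f.order : ℤ) : WithBot ℤ) := if_neg hf

lemma fdeg_polyPart_inv {g : LaurentSeries Fq} (hg0 : g ≠ 0) (hg : 1 ≤ g.order) :
    fdeg Fq (polyPart Fq g⁻¹) = ((g.order : ℤ) : WithBot ℤ) := by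
  have hinv : (g⁻¹ : LaurentSeries Fq) ≠ 0 := inv_ne_zero hg0
  have hord : (g⁻¹).order = -g.order := order_inv Fq hg0
  have h1 : (polyPart Fq g⁻¹).coeff (-g.order) ≠ 0 := by
    rw [polyPart_coeff, if_pos (by omega)]
    rw [← hord]
    exact HahnSeries.coeff_order_eq_zero.not.mpr hinv
  have h2 : ∀ j, j < -g.order → (polyPart Fq g⁻¹).coeff j = 0 := by
    intro j hj
    rw [polyPart_coeff]
    split
    · exact HahnSeries.coeff_eq_zero_of_lt_order (by omega)
    · rfl
  have h3 : (polyPart Fq g⁻¹).order = -g.order := order_eq_of Fq h1 h2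
  rw [fdeg_of_ne Fq (HahnSeries.ne_zero_of_coeff_ne_zero h1), h3, neg_neg]

/-! ### One step of the geometric Farey map -/

lemma farey_scale {g : LaurentSeries Fq} {n : ℤ} (hg : 2 ≤ g.order) :
    fareyGeom Fq (g, n) = (tvar Fq * g, n + 1) := by
  have hg0 : g ≠ 0 := by rintro rfl; rw [HahnSeries.order_zero] at hg; omega
  rw [fareyGeom]
  dsimp only
  rw [if_pos (Or.inl (by
    rw [fdeg_of_ne Fq hg0]
    exact_mod_cast (by omega : (-g.order : ℤ) < -1)))]
  rw [fracPart_eq_self_of Fq]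
  intro j hj
  rw [tvar_mul_coeff]
  exact HahnSeries.coeff_eq_zero_of_lt_order (by omega)

lemma farey_neg {g : LaurentSeries Fq} {n : ℤ} (hn : n < 0) :
    fareyGeom Fq (g, n) = (fracPart Fq (tvar Fq * g), n + 1) := by
  rw [fareyGeom]
  dsimp only
  rw [if_pos (Or.inr hn)]

lemma farey_invert {g : LaurentSeries Fq} {n : ℤ} (hn : 0 ≤ n) (hg0 : g ≠ 0)
    (hg : g.order = 1) :
    fareyGeom Fq (g, n) = (fracPart Fq ((tvar Fq * g)⁻¹), -(n + 1)) := by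
  rw [fareyGeom]
  dsimp only
  rw [if_neg]
  rintro (h | h)
  · rw [fdeg_of_ne Fq hg0, hg] at h
    have : (-1 : ℤ) < -1 := by exact_mod_cast h
    omega
  · omega

/-! ### Evaluating `geomMat` -/

lemma geomMat_scale {g : LaurentSeries Fq} {n : ℤ} (hn : 0 ≤ n) (hg : 2 ≤ g.order) :
    geomMat Fq (g, n) = !![1, 0; 0, tvar Fq] := by
  have hg0 : g ≠ 0 := by rintro rfl; rw [HahnSeries.order_zero] at hg; omega
  rw [geomMat]
  dsimp only
  rw [if_neg (by omega), if_neg]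
  rw [fdeg_of_ne Fq hg0]
  intro h
  have : -g.order = (-1 : ℤ) := by exact_mod_cast h
  omega

lemma geomMat_invert {g : LaurentSeries Fq} {n : ℤ} (hn : 0 ≤ n) (hg0 : g ≠ 0)
    (hg : g.order = 1) :
    geomMat Fq (g, n)
      = !![0, 1; tvar Fq, tvar Fq * polyPart Fq ((tvar Fq * g)⁻¹)] := by
  rw [geomMat]
  dsimp only
  rw [if_neg (by omega), if_pos]
  rw [fdeg_of_ne Fq hg0, hg]

lemma geomMat_neg {g : LaurentSeries Fq} {n : ℤ} (hn : n < 0) :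
    geomMat Fq (g, n)
      = !![(tvar Fq)⁻¹, (tvar Fq)⁻¹ * polyPart Fq (tvar Fq * g); 0, 1] := by
  rw [geomMat]
  dsimp only
  rw [if_pos hn]

/-! ### The orbit within one period -/

lemma orbitA {g : LaurentSeries Fq} (hg0 : g ≠ 0) {d : ℕ} (hgd : g.order = (d : ℤ))
    {j : ℕ} (hj : j + 1 ≤ d) :
    (fareyGeom Fq)^[j] (g, 0) = (tvar Fq ^ j * g, (j : ℤ)) := by
  induction j with
  | zero => simp
  | succ j ih =>
    rw [Function.iterate_succ_apply', ih (by omega)]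
    rw [farey_scale Fq (by rw [order_tvar_pow_mul Fq j hg0, hgd]; omega)]
    simp only [Prod.mk.injEq]
    refine ⟨by rw [pow_succ]; ring, by push_cast; ring⟩

lemma orbitB {g : LaurentSeries Fq} (hg0 : g ≠ 0) {d : ℕ} (hd1 : 1 ≤ d)
    (hgd : g.order = (d : ℤ)) :
    (fareyGeom Fq)^[d] (g, 0)
      = (fracPart Fq ((tvar Fq ^ d * g)⁻¹), -(d : ℤ)) := by
  obtain ⟨e, rfl⟩ : ∃ e, d = e + 1 := ⟨d - 1, by omega⟩
  rw [Function.iterate_succ_apply', orbitA Fq hg0 hgd (by omega)]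
  rw [farey_invert Fq (by positivity) (mul_ne_zero (tvar_pow_ne_zero Fq _) hg0)
    (by rw [order_tvar_pow_mul Fq _ hg0, hgd]; push_cast; omega)]
  simp only [Prod.mk.injEq]
  constructor
  · rw [← mul_assoc, ← pow_succ']
  · push_cast; ring

lemma orbitC {g : LaurentSeries Fq} (hg0 : g ≠ 0) {d : ℕ} (hd1 : 1 ≤ d)
    (hgd : g.order = (d : ℤ)) {j : ℕ} (hj : j ≤ d) :
    (fareyGeom Fq)^[d + j] (g, 0)
      = (fracPart Fq (tvar Fq ^ j * (tvar Fq ^ d * g)⁻¹), -(d : ℤ) + j) := by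
  induction j with
  | zero => rw [Nat.add_zero, orbitB Fq hg0 hd1 hgd]; simp
  | succ j ih =>
    rw [← Nat.add_assoc, Function.iterate_succ_apply', ih (by omega)]
    rw [farey_neg Fq (by push_cast; omega)]
    simp only [Prod.mk.injEq]
    constructor
    · rw [fracPart_tvar Fq, pow_succ]; ring_nf
    · push_cast; ring

/-! ### List product helpers -/

lemma prod_range_add {M : Type*} [Monoid M] (f : ℕ → M) (a b : ℕ) :
    ((List.range (a + b)).map f).prod
      = ((List.range a).map f).prod * ((List.range b).map (fun j => f (a + j))).prod := by
  induction b with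
  | zero => simp
  | succ b ih =>
    rw [← Nat.add_assoc, List.range_succ, List.range_succ, List.map_append, List.map_append,
      List.prod_append, List.prod_append, ih, mul_assoc]
    simp

lemma prod_const_matrix {α : Type*} [CommRing α] (m : ℕ)
    (f : ℕ → Matrix (Fin 2) (Fin 2) α) (c : Matrix (Fin 2) (Fin 2) α)
    (h : ∀ j < m, f j = c) :
    ((List.range m).map f).prod = c ^ m := by
  have he : ((List.range m).map f).prod = c ^ ((List.range m).map f).length := by
    apply List.prod_eq_pow_card
    intro x hx
    rw [List.mem_map] at hx
    obtain ⟨j, hj, rfl⟩ := hx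
    exact h j (List.mem_range.mp hj)
  simpa using he

lemma diag_pow {α : Type*} [CommRing α] (a : α) (m : ℕ) :
    (!![1, 0; 0, a] : Matrix (Fin 2) (Fin 2) α) ^ m = !![1, 0; 0, a ^ m] := by
  induction m with
  | zero => simp [Matrix.one_fin_two]
  | succ m ih =>
    rw [pow_succ, ih, Matrix.mul_fin_two]
    exact mat2_congr (by ring) (by ring) (by ring) (by rw [pow_succ]; ring)

lemma lowerProd (h : LaurentSeries Fq) (m : ℕ) :
    ((List.range m).map (fun j =>
        (!![(tvar Fq)⁻¹, (tvar Fq)⁻¹ * (polyPart Fq (tvar Fq ^ (j + 1) * h)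
              - tvar Fq * polyPart Fq (tvar Fq ^ j * h)); 0, 1] :
          Matrix (Fin 2) (Fin 2) (LaurentSeries Fq)))).prod
      = !![(tvar Fq)⁻¹ ^ m,
            (tvar Fq)⁻¹ ^ m * polyPart Fq (tvar Fq ^ m * h) - polyPart Fq h; 0, 1] := by
  have ht : (tvar Fq)⁻¹ * tvar Fq = 1 := inv_mul_cancel₀ (tvar_ne_zero Fq)
  induction m with
  | zero => simp [Matrix.one_fin_two]
  | succ m ih =>
    rw [List.range_succ, List.map_append, List.prod_append, ih]
    simp only [List.map_cons, List.map_nil, List.prod_cons, List.prod_nil, mul_one]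
    rw [Matrix.mul_fin_two]
    refine mat2_congr (by rw [pow_succ]; ring) ?_ (by ring) (by ring)
    linear_combination (-((tvar Fq)⁻¹ ^ m * polyPart Fq (tvar Fq ^ m * h))) * ht

/-! ### The product over one full period -/

lemma periodProd {g : LaurentSeries Fq} (hg0 : g ≠ 0) {d : ℕ} (hd1 : 1 ≤ d)
    (hgd : g.order = (d : ℤ)) :
    (fareyGeom Fq)^[2 * d] (g, 0) = (artin Fq g, 0) ∧
    ((List.range (2 * d)).map (fun j => geomMat Fq ((fareyGeom Fq)^[j] (g, 0)))).prod
      = !![0, 1; 1, polyPart Fq (g⁻¹)] := by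
  have htd : tvar Fq ^ d * (tvar Fq ^ d * g)⁻¹ = g⁻¹ := by
    rw [mul_inv, ← mul_assoc, mul_inv_cancel₀ (tvar_pow_ne_zero Fq d), one_mul]
  constructor
  · have h2d : 2 * d = d + d := by omega
    rw [h2d, orbitC Fq hg0 hd1 hgd (le_refl d), htd]
    simp only [Prod.mk.injEq]
    exact ⟨rfl, by ring⟩
  · obtain ⟨e, rfl⟩ : ∃ e, d = e + 1 := ⟨d - 1, by omega⟩
    have h2d : 2 * (e + 1) = e + (1 + (e + 1)) := by omega
    rw [h2d, prod_range_add, prod_range_add]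
    have hc1 : ((List.range e).map
        (fun j => geomMat Fq ((fareyGeom Fq)^[j] (g, 0)))).prod
          = !![1, 0; 0, tvar Fq ^ e] := by
      rw [prod_const_matrix e _ !![1, 0; 0, tvar Fq], diag_pow]
      intro j hj
      rw [orbitA Fq hg0 hgd (by omega)]
      exact geomMat_scale Fq (by positivity)
        (by rw [order_tvar_pow_mul Fq j hg0, hgd]; push_cast; omega)
    have hc2 : ((List.range 1).map
        (fun j => geomMat Fq ((fareyGeom Fq)^[e + j] (g, 0)))).prod
          = !![0, 1; tvar Fq, tvar Fq * polyPart Fq ((tvar Fq ^ (e + 1) * g)⁻¹)] := by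
      simp only [List.range_succ, List.range_zero, List.map_append, List.map_cons,
        List.map_nil, List.prod_append, List.prod_cons, List.prod_nil, List.nil_append,
        mul_one, one_mul, Nat.add_zero]
      rw [orbitA Fq hg0 hgd (by omega)]
      rw [geomMat_invert Fq (by positivity) (mul_ne_zero (tvar_pow_ne_zero Fq _) hg0)
        (by rw [order_tvar_pow_mul Fq _ hg0, hgd]; push_cast; omega)]
      rw [← mul_assoc, ← pow_succ']
    have hc3 : ((List.range (e + 1)).map
        (fun j => geomMat Fq ((fareyGeom Fq)^[e + (1 + j)] (g, 0)))).prod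
          = !![(tvar Fq)⁻¹ ^ (e + 1),
                (tvar Fq)⁻¹ ^ (e + 1) * polyPart Fq (g⁻¹)
                  - polyPart Fq ((tvar Fq ^ (e + 1) * g)⁻¹); 0, 1] := by
      have heq : ∀ j < e + 1, geomMat Fq ((fareyGeom Fq)^[e + (1 + j)] (g, 0))
          = !![(tvar Fq)⁻¹,
                (tvar Fq)⁻¹ * (polyPart Fq (tvar Fq ^ (j + 1) * (tvar Fq ^ (e + 1) * g)⁻¹)
                - tvar Fq * polyPart Fq (tvar Fq ^ j * (tvar Fq ^ (e + 1) * g)⁻¹)); 0, 1] := by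
        intro j hj
        have hidx : e + (1 + j) = (e + 1) + j := by omega
        rw [hidx, orbitC Fq hg0 hd1 hgd (by omega)]
        rw [geomMat_neg Fq (by push_cast; omega)]
        rw [polyPart_tvar_fracPart Fq]
        have hp : tvar Fq * (tvar Fq ^ j * (tvar Fq ^ (e + 1) * g)⁻¹)
            = tvar Fq ^ (j + 1) * (tvar Fq ^ (e + 1) * g)⁻¹ := by
          rw [pow_succ]; ring
        rw [hp]
      rw [List.map_congr_left (fun j hj => heq j (List.mem_range.mp hj)), lowerProd Fq, htd]
    rw [hc1, hc2, hc3, Matrix.mul_fin_two, Matrix.mul_fin_two]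
    have h1 : tvar Fq ^ e * tvar Fq = tvar Fq ^ (e + 1) := by rw [pow_succ]
    have h2 : tvar Fq ^ (e + 1) * (tvar Fq)⁻¹ ^ (e + 1) = 1 := by
      rw [← mul_pow, mul_inv_cancel₀ (tvar_ne_zero Fq), one_pow]
    refine mat2_congr (by ring) (by ring) ?_ ?_
    · linear_combination h2
    · linear_combination (polyPart Fq g⁻¹) * h2

/-! ### Iterating over several periods -/

lemma mainProd (g : LaurentSeries Fq) (m : ℕ) (e : ℕ → ℕ)
    (h : ∀ n, n < m → (artin Fq)^[n] g ≠ 0 ∧ ((artin Fq)^[n] g).order = (e n : ℤ)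
      ∧ 1 ≤ e n) :
    (fareyGeom Fq)^[2 * ∑ n ∈ Finset.range m, e n] (g, 0) = ((artin Fq)^[m] g, 0) ∧
    ((List.range (2 * ∑ n ∈ Finset.range m, e n)).map
        (fun j => geomMat Fq ((fareyGeom Fq)^[j] (g, 0)))).prod
      = ((List.range m).map
          (fun n => !![0, 1; 1, polyPart Fq (((artin Fq)^[n] g)⁻¹)])).prod := by
  induction m with
  | zero => simp
  | succ m ih =>
    obtain ⟨ihs, ihp⟩ := ih (fun n hn => h n (by omega))
    obtain ⟨hg0, hgord, hge⟩ := h m (by omega)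
    obtain ⟨ps, pp⟩ := periodProd Fq hg0 hge hgord
    have hsum : 2 * ∑ n ∈ Finset.range (m + 1), e n
        = 2 * ∑ n ∈ Finset.range m, e n + 2 * e m := by
      rw [Finset.sum_range_succ]; ring
    have hstate : ∀ j : ℕ, (fareyGeom Fq)^[2 * ∑ n ∈ Finset.range m, e n + j] (g, 0)
        = (fareyGeom Fq)^[j] ((artin Fq)^[m] g, 0) := by
      intro j
      rw [Nat.add_comm, Function.iterate_add_apply, ihs]
    constructor
    · rw [hsum, hstate, ps, Function.iterate_succ_apply']
    · rw [hsum, prod_range_add, ihp, List.range_succ, List.map_append, List.prod_append]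
      congr 1
      simp only [List.map_cons, List.map_nil, List.prod_cons, List.prod_nil, mul_one]
      rw [← pp]
      congr 1
      apply List.map_congr_left
      intro j hj
      rw [hstate]

/-! ### The tail -/

lemma tailProd {g : LaurentSeries Fq} (hg0 : g ≠ 0) {d : ℕ} (hgd : g.order = (d : ℤ))
    {i : ℕ} (hi : i < d) :
    ((List.range i).map (fun j => geomMat Fq ((fareyGeom Fq)^[j] (g, 0)))).prod
      = !![1, 0; 0, tvar Fq ^ i] := by
  rw [prod_const_matrix i _ !![1, 0; 0, tvar Fq], diag_pow]
  intro j hj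
  rw [orbitA Fq hg0 hgd (by omega)]
  exact geomMat_scale Fq (by positivity)
    (by rw [order_tvar_pow_mul Fq j hg0, hgd]; push_cast; omega)

/-! ### Convergents -/

lemma convProd (f : LaurentSeries Fq) (k : ℕ) :
    ((List.range k).map (fun n => !![0, 1; 1, pquot Fq f (n + 1)])).prod
      = !![Pc Fq f k, Pc Fq f (k + 1); Qc Fq f k, Qc Fq f (k + 1)] := by
  induction k with
  | zero =>
    simp [Pc, Qc, convPQ, Matrix.one_fin_two]
  | succ k ih =>
    rw [List.range_succ, List.map_append, List.prod_append, ih]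
    simp only [List.map_cons, List.map_nil, List.prod_cons, List.prod_nil, mul_one]
    rw [Matrix.mul_fin_two]
    have hP : Pc Fq f (k + 2) = pquot Fq f (k + 1) * Pc Fq f (k + 1) + Pc Fq f k := rfl
    have hQ : Qc Fq f (k + 2) = pquot Fq f (k + 1) * Qc Fq f (k + 1) + Qc Fq f k := rfl
    exact mat2_congr (by ring) (by rw [hP]; ring) (by ring) (by rw [hQ]; ring)

lemma sum_Icc_shift (d : ℕ → ℕ) (k : ℕ) :
    ∑ n ∈ Finset.Icc 1 k, d n = ∑ n ∈ Finset.range k, d (n + 1) := by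
  induction k with
  | zero => simp
  | succ m ih => rw [Finset.sum_Icc_succ_top (by omega), ih, Finset.sum_range_succ]

end GeomAux

/-- If `ℓ = 2(deg A_1 + ⋯ + deg A_k) + i` with `0 ≤ i < deg A_{k+1}`, then
`M(f,0)·M(F(f,0))⋯M(F^{ℓ-1}(f,0)) = [[P_{k-1}, tⁱ·P_k], [Q_{k-1}, tⁱ·Q_k]]`. -/
theorem geom_matrix_product_first_case
    (f : LaurentSeries Fq) (hfL : f ∈ setL Fq) (hfirr : f ∉ ratSet Fq)
    (k : ℕ) (d : ℕ → ℕ)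
    (hd : ∀ n, 1 ≤ n → n ≤ k + 1 → fdeg Fq (pquot Fq f n) = ((d n : ℤ) : WithBot ℤ))
    (i : ℕ) (hi : i < d (k + 1))
    (ℓ : ℕ) (hℓ : ℓ = 2 * ∑ n ∈ Finset.Icc 1 k, d n + i) :
    ((List.range ℓ).map (fun j => geomMat Fq ((fareyGeom Fq)^[j] (f, 0)))).prod
      = !![Pc Fq f k, (tvar Fq) ^ i * Pc Fq f (k + 1);
           Qc Fq f k, (tvar Fq) ^ i * Qc Fq f (k + 1)] := by
  classical
  have hf0 : f ≠ 0 := by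
    intro hf
    have h1 := hd 1 le_rfl (by omega)
    have hpq : pquot Fq f 1 = 0 := by
      rw [pquot, hf]
      simp only [Nat.sub_self, Function.iterate_zero, id_eq, inv_zero]
      exact GeomAux.polyPart_eq_zero_of Fq (by simp)
    rw [hpq, fdeg, if_pos rfl] at h1
    exact WithBot.bot_ne_coe h1
  have hfo : 1 ≤ f.order := by
    by_contra hc
    push_neg at hc
    have hfabs : fabs Fq f < 1 := hfL
    rw [fabs, if_neg hf0] at hfabs
    have hcard : (1 : ℝ) ≤ (Fintype.card Fq : ℝ) := by
      exact_mod_cast Nat.one_le_iff_ne_zero.mpr Fintype.card_ne_zero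
    have : (1 : ℝ) ≤ (Fintype.card Fq : ℝ) ^ (-f.order) :=
      one_le_zpow₀ hcard (by omega)
    linarith
  have key : ∀ n ≤ k, (artin Fq)^[n] f ≠ 0 ∧ ((artin Fq)^[n] f).order = ((d (n + 1) : ℕ) : ℤ)
      ∧ 1 ≤ d (n + 1) := by
    intro n hn
    have hne : (artin Fq)^[n] f ≠ 0 := by
      intro hz
      have h1 := hd (n + 1) (by omega) (by omega)
      have hpq : pquot Fq f (n + 1) = 0 := by
        rw [pquot]
        simp only [Nat.add_sub_cancel, hz, inv_zero]
        exact GeomAux.polyPart_eq_zero_of Fq (by simp)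
      rw [hpq, fdeg, if_pos rfl] at h1
      exact WithBot.bot_ne_coe h1
    have hord1 : 1 ≤ ((artin Fq)^[n] f).order := by
      cases n with
      | zero => simpa using hfo
      | succ n =>
        apply GeomAux.order_pos_of Fq hne
        intro j hj
        rw [Function.iterate_succ_apply', artin, GeomAux.fracPart_coeff, if_pos hj]
    have h1 := hd (n + 1) (by omega) (by omega)
    have hpq : pquot Fq f (n + 1) = polyPart Fq (((artin Fq)^[n] f)⁻¹) := by
      rw [pquot]
      simp
    rw [hpq, GeomAux.fdeg_polyPart_inv Fq hne hord1] at h1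
    have h2 : ((artin Fq)^[n] f).order = ((d (n + 1) : ℕ) : ℤ) := by
      exact_mod_cast h1
    exact ⟨hne, h2, by omega⟩
  have hsum : ∑ n ∈ Finset.Icc 1 k, d n = ∑ n ∈ Finset.range k, d (n + 1) :=
    GeomAux.sum_Icc_shift d k
  obtain ⟨ms, mp⟩ := GeomAux.mainProd Fq f k (fun n => d (n + 1))
    (fun n hn => ⟨(key n hn.le).1, (key n hn.le).2.1, (key n hn.le).2.2⟩)
  have hconv : ∀ n : ℕ, polyPart Fq (((artin Fq)^[n] f)⁻¹) = pquot Fq f (n + 1) := by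
    intro n
    rw [pquot]
    simp
  subst hℓ
  rw [hsum, GeomAux.prod_range_add]
  have hstate : ∀ j : ℕ,
      (fareyGeom Fq)^[2 * ∑ n ∈ Finset.range k, d (n + 1) + j] (f, 0)
        = (fareyGeom Fq)^[j] ((artin Fq)^[k] f, 0) := by
    intro j
    rw [Nat.add_comm, Function.iterate_add_apply, ms]
  have htail : ((List.range i).map
      (fun j => geomMat Fq
        ((fareyGeom Fq)^[2 * ∑ n ∈ Finset.range k, d (n + 1) + j] (f, 0)))).prod
      = !![1, 0; 0, tvar Fq ^ i] := by
    have : ∀ j ∈ List.range i,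
        geomMat Fq ((fareyGeom Fq)^[2 * ∑ n ∈ Finset.range k, d (n + 1) + j] (f, 0))
          = geomMat Fq ((fareyGeom Fq)^[j] ((artin Fq)^[k] f, 0)) := by
      intro j _
      rw [hstate]
    rw [List.map_congr_left this]
    exact GeomAux.tailProd Fq (key k le_rfl).1 (key k le_rfl).2.1 hi
  rw [mp, htail]
  have hmain : ((List.range k).map
      (fun n => !![0, 1; 1, polyPart Fq (((artin Fq)^[n] f)⁻¹)])).prod
      = !![Pc Fq f k, Pc Fq f (k + 1); Qc Fq f k, Qc Fq f (k + 1)] := by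
    rw [← GeomAux.convProd Fq f k]
    exact congrArg List.prod (List.map_congr_left (fun n _ => by rw [hconv]))
  rw [hmain, Matrix.mul_fin_two]
  exact GeomAux.mat2_congr (by ring) (by ring) (by ring) (by ring)

end
end

section
/- Let f ∈ 𝕃 ∖ 𝔽_q(t), let k ≥ 0, write A_{k+1} = a_m tᵐ + a_{m−1}t^{m−1} + ⋯ + a_0 with a_m ≠ 0 and m = deg A_{k+1}. If ℓ = 2·(deg A_1 + ⋯ + deg A_k) + deg A_{k+1} + i with 0 ≤ i ≤ deg A_{k+1}, then the matrix product M(f,0)·M(F(f,0))·⋯·M(F^{ℓ−1}(f,0)) equals the 2×2 matrix with rows (t^{m−i}·P_k, (a_m tᵐ + ⋯ + a_{m−i}t^{m−i})·P_k + P_{k−1}) and (t^{m−i}·Q_k, (a_m tᵐ + ⋯ + a_{m−i}t^{m−i})·Q_k + Q_{k−1}). -/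
/-!
Setting: `q` a prime power is formalized as `q = Fintype.card Fq` for a finite field `Fq`.
The field `K = 𝔽_q((t⁻¹))` of formal Laurent series in `t⁻¹` is realized as
`LaurentSeries Fq = 𝔽_q((X))` with `X = t⁻¹` (so `deg f = -(X-adic order of f)`).
-/

open scoped Classical
open MeasureTheory Filter
open scoped ENNReal

noncomputable section

variable (Fq : Type) [Field Fq] [Fintype Fq]

/-! ### Auxiliary lemmas -/

namespace FareyAux

set_option linter.unusedSectionVars false

variable {Fq : Type} [Field Fq] [Fintype Fq]

lemma Xmul : (HahnSeries.single (1:ℤ) (1:Fq)) * (HahnSeries.single (-1:ℤ) (1:Fq)) = 1 := by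
  rw [HahnSeries.single_mul_single]; norm_num

lemma tvar_eq : tvar Fq = HahnSeries.single (-1:ℤ) (1:Fq) := by
  rw [tvar]; exact inv_eq_of_mul_eq_one_right Xmul

lemma tvar_pow (n : ℕ) : (tvar Fq) ^ n = HahnSeries.single (-(n:ℤ)) (1:Fq) := by
  rw [tvar_eq, HahnSeries.single_pow, one_pow]
  congr 1
  simp

lemma tvar_ne_zero : tvar Fq ≠ 0 := by
  rw [tvar_eq]
  exact HahnSeries.single_ne_zero one_ne_zero

lemma tvar_pow_inv (n : ℕ) : ((tvar Fq) ^ n)⁻¹ = HahnSeries.single ((n:ℤ)) (1:Fq) := by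
  refine inv_eq_of_mul_eq_one_right ?_
  rw [tvar_pow, HahnSeries.single_mul_single]
  norm_num

lemma single_one_mul_coeff (b j : ℤ) (g : LaurentSeries Fq) :
    (HahnSeries.single b (1:Fq) * g).coeff j = g.coeff (j - b) := by
  have h := HahnSeries.coeff_single_mul_add (r := (1:Fq)) (x := g) (a := j - b) (b := b)
  rw [sub_add_cancel] at h
  rw [h, one_mul]

lemma tvar_mul_coeff (g : LaurentSeries Fq) (j : ℤ) :
    (tvar Fq * g).coeff j = g.coeff (j + 1) := by
  rw [tvar_eq, single_one_mul_coeff, sub_neg_eq_add]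

lemma cutoff_coeff (N : ℤ) (f : LaurentSeries Fq) (j : ℤ) :
    (cutoff Fq N f).coeff j = if j ≤ N then f.coeff j else 0 := rfl

lemma polyPart_coeff (f : LaurentSeries Fq) (j : ℤ) :
    (polyPart Fq f).coeff j = if j ≤ 0 then f.coeff j else 0 := rfl

lemma fracPart_coeff (f : LaurentSeries Fq) (j : ℤ) :
    (fracPart Fq f).coeff j = if j ≤ 0 then 0 else f.coeff j := by
  rw [fracPart, HahnSeries.coeff_sub, polyPart_coeff]
  split <;> simp

lemma hahn_ext {x y : LaurentSeries Fq} (h : ∀ j, x.coeff j = y.coeff j) : x = y :=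
  HahnSeries.coeff_injective (funext h)

lemma frac_tvar_frac (x : LaurentSeries Fq) :
    fracPart Fq (tvar Fq * fracPart Fq x) = fracPart Fq (tvar Fq * x) := by
  refine hahn_ext fun j => ?_
  rw [fracPart_coeff, fracPart_coeff, tvar_mul_coeff, tvar_mul_coeff, fracPart_coeff]
  by_cases h : j ≤ 0
  · simp [h]
  · rw [if_neg h, if_neg h, if_neg (by omega)]

lemma polyPart_tvar_frac (x : LaurentSeries Fq) :
    polyPart Fq (tvar Fq * fracPart Fq x) = HahnSeries.single (0:ℤ) (x.coeff 1) := by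
  refine hahn_ext fun j => ?_
  rw [polyPart_coeff, tvar_mul_coeff, fracPart_coeff, HahnSeries.coeff_single]
  by_cases h : j = 0
  · subst h; norm_num
  · by_cases h2 : j ≤ 0
    · rw [if_pos h2, if_pos (by omega), if_neg h]
    · rw [if_neg h2, if_neg h]

lemma polyPart_of_order_nonneg {x : LaurentSeries Fq} (h : 0 ≤ x.order) :
    polyPart Fq x = HahnSeries.single (0:ℤ) (x.coeff 0) := by
  refine hahn_ext fun j => ?_
  rw [polyPart_coeff, HahnSeries.coeff_single]
  by_cases hj : j = 0
  · subst hj; simp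
  · by_cases h2 : j ≤ 0
    · rw [if_pos h2, if_neg hj, HahnSeries.coeff_eq_zero_of_lt_order (by omega)]
    · rw [if_neg h2, if_neg hj]

lemma fracPart_of_order_pos {x : LaurentSeries Fq} (h : 1 ≤ x.order) :
    fracPart Fq x = x := by
  refine hahn_ext fun j => ?_
  rw [fracPart_coeff]
  by_cases hj : j ≤ 0
  · rw [if_pos hj, HahnSeries.coeff_eq_zero_of_lt_order (by omega)]
  · rw [if_neg hj]

lemma one_le_order_fracPart {x : LaurentSeries Fq} (hx : fracPart Fq x ≠ 0) :
    1 ≤ (fracPart Fq x).order := by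
  by_contra h
  push_neg at h
  have := HahnSeries.coeff_order_eq_zero.not.mpr hx
  rw [fracPart_coeff, if_pos (by omega)] at this
  exact this rfl

lemma order_inv {g : LaurentSeries Fq} (hg : g ≠ 0) : (g⁻¹).order = -g.order := by
  have h1 : g * g⁻¹ = 1 := mul_inv_cancel₀ hg
  have h2 := HahnSeries.order_mul hg (inv_ne_zero hg)
  rw [h1, HahnSeries.order_one] at h2
  omega

lemma polyPart_ne_zero {x : LaurentSeries Fq} (h0 : x ≠ 0) (h : x.order ≤ 0) :
    polyPart Fq x ≠ 0 := by
  intro hc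
  have h1 := HahnSeries.coeff_order_eq_zero.not.mpr h0
  have h2 : (polyPart Fq x).coeff x.order = 0 := by rw [hc]; simp
  rw [polyPart_coeff, if_pos h] at h2
  exact h1 h2

lemma polyPart_order {x : LaurentSeries Fq} (h0 : x ≠ 0) (h : x.order ≤ 0) :
    (polyPart Fq x).order = x.order := by
  refine le_antisymm ?_ ?_
  · refine HahnSeries.order_le_of_coeff_ne_zero ?_
    rw [polyPart_coeff, if_pos h]
    exact HahnSeries.coeff_order_eq_zero.not.mpr h0
  · by_contra hc
    push_neg at hc
    have h1 := HahnSeries.coeff_order_eq_zero.not.mpr (polyPart_ne_zero h0 h)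
    rw [polyPart_coeff] at h1
    rcases le_or_gt (polyPart Fq x).order 0 with h2 | h2
    · rw [if_pos h2, HahnSeries.coeff_eq_zero_of_lt_order hc] at h1
      exact h1 rfl
    · rw [if_neg (by omega)] at h1
      exact h1 rfl

lemma cutoff_of_order_eq {x : LaurentSeries Fq} {N : ℤ} (h : x.order = N) :
    cutoff Fq N x = HahnSeries.single N (x.coeff N) := by
  refine hahn_ext fun j => ?_
  rw [cutoff_coeff, HahnSeries.coeff_single]
  by_cases hj : j = N
  · subst hj; simp
  · by_cases h2 : j ≤ N
    · rw [if_pos h2, if_neg hj, HahnSeries.coeff_eq_zero_of_lt_order (by omega)]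
    · rw [if_neg h2, if_neg hj]

lemma cutoff_succ (N : ℤ) (x : LaurentSeries Fq) :
    cutoff Fq (N+1) x = cutoff Fq N x + HahnSeries.single (N+1) (x.coeff (N+1)) := by
  refine hahn_ext fun j => ?_
  rw [cutoff_coeff, HahnSeries.coeff_add, cutoff_coeff, HahnSeries.coeff_single]
  by_cases hj : j = N + 1
  · subst hj; rw [if_pos le_rfl, if_neg (by omega), if_pos rfl, zero_add]
  · by_cases h2 : j ≤ N
    · rw [if_pos (by omega), if_pos h2, if_neg hj, add_zero]
    · rw [if_neg (by omega), if_neg h2, if_neg hj, add_zero]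

lemma cutoff_polyPart {x : LaurentSeries Fq} {N : ℤ} (h : N ≤ 0) :
    cutoff Fq N (polyPart Fq x) = cutoff Fq N x := by
  refine hahn_ext fun j => ?_
  rw [cutoff_coeff, cutoff_coeff, polyPart_coeff]
  by_cases hj : j ≤ N
  · rw [if_pos hj, if_pos hj, if_pos (by omega)]
  · rw [if_neg hj, if_neg hj]

lemma cutoff_zero_polyPart (x : LaurentSeries Fq) :
    cutoff Fq 0 (polyPart Fq x) = polyPart Fq x := by
  rw [cutoff_polyPart le_rfl]; rfl

lemma algMap_single (a : Fq) :
    (algebraMap Fq (LaurentSeries Fq)) a = HahnSeries.single (0:ℤ) a := by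
  rw [HahnSeries.algebraMap_apply', show (algebraMap Fq (PowerSeries Fq)) a = PowerSeries.C a from rfl,
    HahnSeries.ofPowerSeries_C, HahnSeries.C_apply]

lemma polyT_coeff_neg (P : Polynomial Fq) (n : ℕ) :
    (polyT Fq P).coeff (-(n:ℤ)) = P.coeff n := by
  induction P using Polynomial.induction_on' with
  | add p q hp hq => rw [polyT, map_add, HahnSeries.coeff_add, Polynomial.coeff_add, ← polyT, ← polyT, hp, hq]
  | monomial r a =>
      rw [polyT, Polynomial.aeval_monomial, algMap_single, tvar_pow,
        HahnSeries.single_mul_single, zero_add, mul_one,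
        HahnSeries.coeff_single, Polynomial.coeff_monomial]
      by_cases h : n = r
      · subst h; simp
      · rw [if_neg (by omega), if_neg (by omega)]

lemma polyT_coeff_pos (P : Polynomial Fq) (j : ℤ) (hj : 0 < j) :
    (polyT Fq P).coeff j = 0 := by
  induction P using Polynomial.induction_on' with
  | add p q hp hq => rw [polyT, map_add, HahnSeries.coeff_add, ← polyT, ← polyT, hp, hq, add_zero]
  | monomial r a =>
      rw [polyT, Polynomial.aeval_monomial, algMap_single, tvar_pow,
        HahnSeries.single_mul_single, zero_add, mul_one,
        HahnSeries.coeff_single, if_neg (by omega)]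

lemma polyT_ne_zero {Q : Polynomial Fq} (hQ : Q ≠ 0) : polyT Fq Q ≠ 0 := by
  intro h
  have := polyT_coeff_neg Q Q.natDegree
  rw [h, HahnSeries.coeff_zero] at this
  exact Polynomial.leadingCoeff_ne_zero.mpr hQ this.symm

lemma polyPart_is_polyT (x : LaurentSeries Fq) :
    ∃ P : Polynomial Fq, polyT Fq P = polyPart Fq x := by
  set N : ℕ := (-x.order).toNat + 1 with hN
  have hNlarge : ∀ n : ℕ, N ≤ n → x.coeff (-(n:ℤ)) = 0 := by
    intro n hn
    refine HahnSeries.coeff_eq_zero_of_lt_order ?_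
    have h1 : (-x.order).toNat + 1 ≤ n := hn
    rcases le_or_gt 0 (-x.order) with h | h
    · have := Int.toNat_of_nonneg h; omega
    · have : (-x.order).toNat = 0 := Int.toNat_of_nonpos (by omega)
      omega
  refine ⟨∑ r ∈ Finset.range N, Polynomial.monomial r (x.coeff (-(r:ℤ))), hahn_ext fun j => ?_⟩
  rw [polyPart_coeff]
  by_cases hj : j ≤ 0
  · obtain ⟨n, rfl⟩ : ∃ n : ℕ, j = -(n:ℤ) := ⟨(-j).toNat, by omega⟩
    rw [if_pos hj, polyT_coeff_neg, Polynomial.finset_sum_coeff]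
    simp only [Polynomial.coeff_monomial]
    rw [Finset.sum_ite_eq' (Finset.range N) n (fun r => x.coeff (-(r:ℤ)))]
    by_cases hn : n ∈ Finset.range N
    · rw [if_pos hn]
    · rw [if_neg hn, hNlarge n (by simpa using hn)]
  · rw [if_neg hj, polyT_coeff_pos _ _ (by omega)]

lemma rat_zero : (0 : LaurentSeries Fq) ∈ ratSet Fq :=
  ⟨0, 1, one_ne_zero, by rw [polyT, polyT, map_zero, map_one, zero_div]⟩

lemma self_eq_polyPart_add_fracPart (x : LaurentSeries Fq) :
    x = polyPart Fq x + fracPart Fq x := by rw [fracPart]; ring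

lemma rat_of_artin {g : LaurentSeries Fq} (hg : g ≠ 0) (h : artin Fq g ∈ ratSet Fq) :
    g ∈ ratSet Fq := by
  obtain ⟨P, Q, hQ, hPQ⟩ := h
  obtain ⟨A, hA⟩ := polyPart_is_polyT (g⁻¹)
  have hQ' : polyT Fq Q ≠ 0 := polyT_ne_zero hQ
  have hexp : polyT Fq (A * Q + P) = polyT Fq A * polyT Fq Q + polyT Fq P := by
    simp only [polyT, map_add, map_mul]
  have hginv : g⁻¹ = polyT Fq (A * Q + P) / polyT Fq Q := by
    rw [eq_div_iff hQ', hexp, hA]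
    have h3 : g⁻¹ = polyPart Fq (g⁻¹) + polyT Fq P / polyT Fq Q := by
      have h4 := self_eq_polyPart_add_fracPart (g⁻¹)
      rw [show fracPart Fq g⁻¹ = artin Fq g from rfl, hPQ] at h4
      exact h4
    conv_lhs => rw [h3]
    rw [add_mul, div_mul_cancel₀ _ hQ']
  have hR : polyT Fq (A * Q + P) ≠ 0 := by
    intro h0
    have : g⁻¹ ≠ 0 := inv_ne_zero hg
    rw [hginv, h0, zero_div] at this
    exact this rfl
  refine ⟨Q, A * Q + P, by intro h0; exact hR (by rw [h0, polyT, map_zero]), ?_⟩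
  rw [← inv_inv g, hginv, inv_div]

lemma good_artin {g : LaurentSeries Fq} (hg : g ∉ ratSet Fq) :
    artin Fq g ∉ ratSet Fq ∧ artin Fq g ≠ 0 ∧ 1 ≤ (artin Fq g).order := by
  have hg0 : g ≠ 0 := fun h => hg (h ▸ rat_zero)
  have h1 : artin Fq g ∉ ratSet Fq := fun h => hg (rat_of_artin hg0 h)
  have h2 : artin Fq g ≠ 0 := fun h => h1 (h ▸ rat_zero)
  exact ⟨h1, h2, one_le_order_fracPart h2⟩

lemma good_iter {f : LaurentSeries Fq} (hf : f ∉ ratSet Fq) (hford : 1 ≤ f.order) :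
    ∀ n : ℕ, ((artin Fq)^[n] f ∉ ratSet Fq) ∧ (artin Fq)^[n] f ≠ 0 ∧ 1 ≤ ((artin Fq)^[n] f).order := by
  intro n
  induction n with
  | zero =>
      simp only [Function.iterate_zero_apply]
      exact ⟨hf, fun h => hf (h ▸ rat_zero), hford⟩
  | succ n ih =>
      rw [Function.iterate_succ_apply']
      exact good_artin ih.1

lemma fdeg_of_ne {x : LaurentSeries Fq} (hx : x ≠ 0) :
    fdeg Fq x = ((-x.order : ℤ) : WithBot ℤ) := if_neg hx

lemma tpow_mul_ne {g : LaurentSeries Fq} (hg0 : g ≠ 0) (j : ℕ) : tvar Fq ^ j * g ≠ 0 :=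
  mul_ne_zero (pow_ne_zero _ tvar_ne_zero) hg0

lemma order_tpow_mul {g : LaurentSeries Fq} (hg0 : g ≠ 0) (j : ℕ) :
    (tvar Fq ^ j * g).order = g.order - j := by
  rw [HahnSeries.order_mul (pow_ne_zero _ tvar_ne_zero) hg0, tvar_pow,
    HahnSeries.order_single one_ne_zero]
  ring

section Block

variable {g : LaurentSeries Fq} {e : ℕ}

lemma blockA (hg0 : g ≠ 0) (hord : g.order = (e:ℤ)) :
    ∀ j : ℕ, j + 1 ≤ e → (fareyGeom Fq)^[j] (g, 0) = (tvar Fq ^ j * g, (j:ℤ)) := by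
  intro j
  induction j with
  | zero => intro _; simp
  | succ j ih =>
      intro hj
      rw [Function.iterate_succ_apply', ih (by omega), fareyGeom]
      have h1 : fdeg Fq (tvar Fq ^ j * g) = (((j:ℤ) - e : ℤ) : WithBot ℤ) := by
        rw [fdeg_of_ne (tpow_mul_ne hg0 j), order_tpow_mul hg0, hord]
        congr 1; ring
      rw [if_pos (Or.inl (by rw [h1]; exact_mod_cast (by omega : ((j:ℤ) - e : ℤ) < -1)))]
      have h2 : tvar Fq * (tvar Fq ^ j * g) = tvar Fq ^ (j+1) * g := by ring
      have h3 : 1 ≤ (tvar Fq ^ (j+1) * g).order := by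
        rw [order_tpow_mul hg0, hord]; omega
      simp only [h2]
      rw [fracPart_of_order_pos h3]
      norm_num

lemma blockFlip (hg0 : g ≠ 0) (hord : g.order = (e:ℤ)) (he : 1 ≤ e) :
    (fareyGeom Fq)^[e] (g, 0) = (fracPart Fq ((tvar Fq ^ e * g)⁻¹), -(e:ℤ)) := by
  have h0 : (fareyGeom Fq)^[e] (g,0) = fareyGeom Fq ((fareyGeom Fq)^[e-1] (g,0)) := by
    conv_lhs => rw [show e = e - 1 + 1 from by omega, Function.iterate_succ_apply']
  rw [h0, blockA hg0 hord (e-1) (by omega), fareyGeom]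
  have h1 : fdeg Fq (tvar Fq ^ (e-1) * g) = (((-1:ℤ)) : WithBot ℤ) := by
    rw [fdeg_of_ne (tpow_mul_ne hg0 _), order_tpow_mul hg0, hord]
    congr 1
    have : ((e - 1 : ℕ) : ℤ) = (e : ℤ) - 1 := by omega
    rw [this]; ring
  rw [if_neg]
  · have h2 : tvar Fq * (tvar Fq ^ (e-1) * g) = tvar Fq ^ e * g := by
      rw [← mul_assoc, ← pow_succ', show e - 1 + 1 = e from by omega]
    simp only [h2]
    congr 1
    have : ((e - 1 : ℕ) : ℤ) = (e : ℤ) - 1 := by omega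
    rw [this]; ring
  · rw [not_or, h1]
    constructor
    · simp
    · omega

lemma blockC (hg0 : g ≠ 0) (hord : g.order = (e:ℤ)) (he : 1 ≤ e) :
    ∀ j : ℕ, j ≤ e → (fareyGeom Fq)^[e + j] (g, 0)
      = (fracPart Fq (tvar Fq ^ j * (tvar Fq ^ e * g)⁻¹), (j:ℤ) - e) := by
  intro j
  induction j with
  | zero => intro _; simpa using blockFlip hg0 hord he
  | succ j ih =>
      intro hj
      rw [show e + (j+1) = (e + j) + 1 by omega, Function.iterate_succ_apply', ih (by omega),
        fareyGeom]
      rw [if_pos (Or.inr (by show (j:ℤ) - e < 0; omega))]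
      simp only
      rw [frac_tvar_frac]
      have h2 : tvar Fq * (tvar Fq ^ j * (tvar Fq ^ e * g)⁻¹)
          = tvar Fq ^ (j+1) * (tvar Fq ^ e * g)⁻¹ := by ring
      rw [h2]
      congr 1
      push_cast; ring

lemma blockEnd (hg0 : g ≠ 0) (hord : g.order = (e:ℤ)) (he : 1 ≤ e) :
    (fareyGeom Fq)^[2 * e] (g, 0) = (artin Fq g, 0) := by
  have h := blockC hg0 hord he e le_rfl
  rw [show e + e = 2 * e by omega] at h
  rw [h]
  have h2 : tvar Fq ^ e * (tvar Fq ^ e * g)⁻¹ = g⁻¹ := by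
    rw [mul_inv, ← mul_assoc, mul_inv_cancel₀ (pow_ne_zero _ tvar_ne_zero), one_mul]
  rw [h2]
  norm_num
  rfl

lemma matA (hg0 : g ≠ 0) (hord : g.order = (e:ℤ)) :
    ∀ j : ℕ, j + 2 ≤ e → geomMat Fq (tvar Fq ^ j * g, (j:ℤ)) = !![1, 0; 0, tvar Fq] := by
  intro j hj
  rw [geomMat, if_neg (by simp), if_neg]
  rw [fdeg_of_ne (tpow_mul_ne hg0 j), order_tpow_mul hg0, hord]
  intro hc
  have : -((e:ℤ) - j) = -1 := by exact_mod_cast hc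
  omega

lemma matFlip (hg0 : g ≠ 0) (hord : g.order = (e:ℤ)) (he : 1 ≤ e) :
    geomMat Fq (tvar Fq ^ (e-1) * g, ((e-1 : ℕ):ℤ))
      = !![0, 1; tvar Fq, tvar Fq * HahnSeries.single (0:ℤ) ((g⁻¹).coeff (-(e:ℤ)))] := by
  rw [geomMat, if_neg (by simp), if_pos]
  · congr 1
    have h2 : tvar Fq * (tvar Fq ^ (e-1) * g) = tvar Fq ^ e * g := by
      rw [← mul_assoc, ← pow_succ', show e - 1 + 1 = e from by omega]
    rw [h2]
    have hord2 : ((tvar Fq ^ e * g)⁻¹).order = 0 := by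
      rw [order_inv (tpow_mul_ne hg0 e), order_tpow_mul hg0, hord]; ring
    rw [polyPart_of_order_nonneg (by rw [hord2])]
    congr 2
    have h3 : (tvar Fq ^ e * g)⁻¹ = HahnSeries.single ((e:ℤ)) (1:Fq) * g⁻¹ := by
      rw [mul_inv, tvar_pow_inv]
    rw [h3, single_one_mul_coeff, zero_sub]
  · rw [fdeg_of_ne (tpow_mul_ne hg0 _), order_tpow_mul hg0, hord]
    congr 2
    have : ((e - 1 : ℕ) : ℤ) = (e : ℤ) - 1 := by omega
    rw [this]; ring

lemma matC (hg0 : g ≠ 0) (hord : g.order = (e:ℤ)) :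
    ∀ j : ℕ, j + 1 ≤ e →
      geomMat Fq (fracPart Fq (tvar Fq ^ j * (tvar Fq ^ e * g)⁻¹), (j:ℤ) - e)
      = !![(tvar Fq)⁻¹, (tvar Fq)⁻¹ * HahnSeries.single (0:ℤ) ((g⁻¹).coeff ((j:ℤ) + 1 - e)); 0, 1] := by
  intro j hj
  rw [geomMat, if_pos (by show (j:ℤ) - e < 0; omega)]
  congr 3
  rw [polyPart_tvar_frac]
  congr 1
  have h3 : tvar Fq ^ j * (tvar Fq ^ e * g)⁻¹ = HahnSeries.single ((e:ℤ) - j) (1:Fq) * g⁻¹ := by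
    rw [mul_inv, tvar_pow_inv, tvar_pow, ← mul_assoc, HahnSeries.single_mul_single, one_mul]
    congr 2
    ring
  rw [h3, single_one_mul_coeff]
  congr 1
  ring

end Block

section Prod

variable {g : LaurentSeries Fq} {e : ℕ}

lemma prodDiag (hg0 : g ≠ 0) (hord : g.order = (e:ℤ)) :
    ∀ j : ℕ, j + 1 ≤ e →
      ((List.range j).map (fun r => geomMat Fq ((fareyGeom Fq)^[r] (g, 0)))).prod
        = !![1, 0; 0, tvar Fq ^ j] := by
  intro j
  induction j with
  | zero => intro _; simp [Matrix.one_fin_two]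
  | succ j ih =>
      intro hj
      rw [List.range_succ, List.map_append, List.prod_append, ih (by omega)]
      simp only [List.map_cons, List.map_nil, List.prod_cons, List.prod_nil, mul_one]
      rw [blockA hg0 hord j (by omega), matA hg0 hord j (by omega), Matrix.mul_fin_two]
      congr 1 <;> ring_nf

lemma prodBlock0 (hg0 : g ≠ 0) (hord : g.order = (e:ℤ)) (he : 1 ≤ e) :
    ((List.range e).map (fun r => geomMat Fq ((fareyGeom Fq)^[r] (g, 0)))).prod
      = !![0, 1; tvar Fq ^ e,
            HahnSeries.single (-(e:ℤ)) ((g⁻¹).coeff (-(e:ℤ)))] := by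
  conv_lhs => rw [show e = (e-1) + 1 from by omega]
  rw [List.range_succ, List.map_append, List.prod_append, prodDiag hg0 hord (e-1) (by omega)]
  simp only [List.map_cons, List.map_nil, List.prod_cons, List.prod_nil, mul_one]
  rw [blockA hg0 hord (e-1) (by omega), matFlip hg0 hord he, Matrix.mul_fin_two]
  have h1 : tvar Fq ^ (e-1) * tvar Fq = tvar Fq ^ e := by
    rw [← pow_succ, show e - 1 + 1 = e from by omega]
  have h2 : tvar Fq ^ (e-1) * (tvar Fq * HahnSeries.single (0:ℤ) ((g⁻¹).coeff (-(e:ℤ))))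
      = HahnSeries.single (-(e:ℤ)) ((g⁻¹).coeff (-(e:ℤ))) := by
    rw [← mul_assoc, h1, tvar_pow, HahnSeries.single_mul_single, one_mul, add_comm]
    norm_num
  congr 1 <;> simp [h1, h2]

lemma prodBlockI (hg0 : g ≠ 0) (hord : g.order = (e:ℤ)) (he : 1 ≤ e) :
    ∀ i : ℕ, i ≤ e →
      ((List.range (e + i)).map (fun r => geomMat Fq ((fareyGeom Fq)^[r] (g, 0)))).prod
        = !![0, 1; tvar Fq ^ (e - i), cutoff Fq ((i:ℤ) - e) (g⁻¹)] := by
  intro i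
  induction i with
  | zero =>
      intro _
      rw [Nat.add_zero, Nat.sub_zero, prodBlock0 hg0 hord he,
        show (((0:ℕ):ℤ) - e) = -(e:ℤ) from by push_cast; ring,
        cutoff_of_order_eq (by rw [order_inv hg0, hord])]
  | succ i ih =>
      intro hi
      rw [show e + (i+1) = (e + i) + 1 from by omega, List.range_succ, List.map_append,
        List.prod_append, ih (by omega)]
      simp only [List.map_cons, List.map_nil, List.prod_cons, List.prod_nil, mul_one]
      rw [blockC hg0 hord he i (by omega), matC hg0 hord i (by omega), Matrix.mul_fin_two]
      have ht : tvar Fq ^ (e - i) * (tvar Fq)⁻¹ = tvar Fq ^ (e - (i+1)) := by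
        rw [show e - i = (e - (i+1)) + 1 from by omega, pow_succ,
          mul_inv_cancel_right₀ tvar_ne_zero]
      have hsingle : tvar Fq ^ (e - i) * ((tvar Fq)⁻¹ * HahnSeries.single (0:ℤ) ((g⁻¹).coeff ((i:ℤ) + 1 - e)))
          = HahnSeries.single ((i:ℤ) + 1 - e) ((g⁻¹).coeff ((i:ℤ) + 1 - e)) := by
        rw [← mul_assoc, ht, tvar_pow, HahnSeries.single_mul_single, one_mul, add_comm]
        congr 2
        · push_cast [show (↑(e - (i+1)) : ℤ) = (e:ℤ) - (i+1) from by omega]; ring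
      have hcut : cutoff Fq (((i+1:ℕ):ℤ) - e) (g⁻¹)
          = cutoff Fq ((i:ℤ) - e) (g⁻¹)
            + HahnSeries.single ((i:ℤ) + 1 - e) ((g⁻¹).coeff ((i:ℤ) + 1 - e)) := by
        have := cutoff_succ ((i:ℤ) - e) (g⁻¹)
        rw [show (i:ℤ) - e + 1 = (i:ℤ) + 1 - e from by ring] at this
        rw [show ((i+1:ℕ):ℤ) - e = (i:ℤ) + 1 - e from by push_cast; ring, this]
      rw [hcut]
      congr 1 <;> simp [ht, hsingle] <;> ring

end Prod

lemma order_from_fdeg {g : LaurentSeries Fq} (hg : g ∉ ratSet Fq) (hord : 1 ≤ g.order)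
    {dn : ℕ} (h : fdeg Fq (polyPart Fq g⁻¹) = ((dn:ℤ) : WithBot ℤ)) : g.order = (dn:ℤ) := by
  have hg0 : g ≠ 0 := fun h0 => hg (h0 ▸ rat_zero)
  have hinv : g⁻¹ ≠ 0 := inv_ne_zero hg0
  have hio : (g⁻¹).order = -g.order := order_inv hg0
  have hple : (g⁻¹).order ≤ 0 := by omega
  have hpp : polyPart Fq g⁻¹ ≠ 0 := polyPart_ne_zero hinv hple
  rw [fdeg_of_ne hpp, polyPart_order hinv hple, hio] at h
  have h2 : -(-g.order) = (dn:ℤ) := WithBot.coe_inj.mp h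
  omega

lemma mainProd {f : LaurentSeries Fq} (hf : f ∉ ratSet Fq) (hford : 1 ≤ f.order)
    (d : ℕ → ℕ) :
    ∀ k : ℕ, (∀ n, 1 ≤ n → n ≤ k → ((artin Fq)^[n-1] f).order = ((d n : ℤ))) →
    (fareyGeom Fq)^[2 * ∑ n ∈ Finset.Icc 1 k, d n] (f, 0) = ((artin Fq)^[k] f, 0) ∧
    ((List.range (2 * ∑ n ∈ Finset.Icc 1 k, d n)).map
        (fun j => geomMat Fq ((fareyGeom Fq)^[j] (f,0)))).prod
      = !![(convPQ Fq f k).1, (convPQ Fq f (k+1)).1;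
           (convPQ Fq f k).2, (convPQ Fq f (k+1)).2] := by
  intro k
  induction k with
  | zero =>
      intro _
      rw [show Finset.Icc 1 0 = (∅ : Finset ℕ) from rfl]
      simp only [Finset.sum_empty, Nat.mul_zero]
      refine ⟨by simp, ?_⟩
      simp only [List.range_zero, List.map_nil, List.prod_nil]
      rw [show convPQ Fq f 0 = (1, 0) from rfl, show convPQ Fq f 1 = (0, 1) from rfl]
      simp [Matrix.one_fin_two]
  | succ k ih =>
      intro hd
      obtain ⟨ho, hp⟩ := ih (fun n h1 h2 => hd n h1 (by omega))
      have hgood := good_iter hf hford k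
      have hg0 : (artin Fq)^[k] f ≠ 0 := hgood.2.1
      have hordg : ((artin Fq)^[k] f).order = ((d (k+1) : ℤ)) := by
        have h := hd (k+1) (by omega) le_rfl
        simpa using h
      have he1 : 1 ≤ d (k+1) := by
        have h2 := hgood.2.2
        rw [hordg] at h2
        exact_mod_cast h2
      have hsum : ∑ n ∈ Finset.Icc 1 (k+1), d n = (∑ n ∈ Finset.Icc 1 k, d n) + d (k+1) :=
        Finset.sum_Icc_succ_top (by omega) d
      set S := ∑ n ∈ Finset.Icc 1 k, d n with hS
      set E := d (k+1) with hE
      have hmapeq : (fun j => geomMat Fq ((fareyGeom Fq)^[2*S + j] (f,0)))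
          = (fun j => geomMat Fq ((fareyGeom Fq)^[j] ((artin Fq)^[k] f, 0))) := by
        funext j
        rw [add_comm, Function.iterate_add_apply, ho]
      constructor
      · rw [hsum, show 2 * (S + E) = 2*E + 2*S from by ring, Function.iterate_add_apply, ho,
          blockEnd hg0 hordg he1, Function.iterate_succ_apply']
      · rw [hsum, show 2 * (S + E) = 2*S + 2*E from by ring, List.range_add, List.map_append,
          List.prod_append, hp, List.map_map]
        rw [show ((fun j => geomMat Fq ((fareyGeom Fq)^[j] (f,0))) ∘ (fun x => 2*S + x))
            = (fun j => geomMat Fq ((fareyGeom Fq)^[j] ((artin Fq)^[k] f, 0))) from hmapeq]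
        have hblock := prodBlockI hg0 hordg he1 E le_rfl
        rw [show 2*E = E + E from by ring, hblock, Nat.sub_self, pow_zero, sub_self]
        rw [show cutoff Fq 0 (((artin Fq)^[k] f)⁻¹) = polyPart Fq (((artin Fq)^[k] f)⁻¹) from rfl]
        rw [show convPQ Fq f (k+1+1)
            = (pquot Fq f (k + 1) * (convPQ Fq f (k + 1)).1 + (convPQ Fq f k).1,
               pquot Fq f (k + 1) * (convPQ Fq f (k + 1)).2 + (convPQ Fq f k).2) from rfl]
        rw [show pquot Fq f (k+1) = polyPart Fq (((artin Fq)^[k] f)⁻¹) from rfl]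
        rw [Matrix.mul_fin_two]
        congr 1 <;> ring_nf

end FareyAux
open FareyAux in
/-- If `ℓ = 2(deg A_1 + ⋯ + deg A_k) + deg A_{k+1} + i` with
`0 ≤ i ≤ m = deg A_{k+1}`, then `M(f,0)·M(F(f,0))⋯M(F^{ℓ-1}(f,0))` equals the matrix with
rows `(t^{m-i}·P_k, S·P_k + P_{k-1})` and `(t^{m-i}·Q_k, S·Q_k + Q_{k-1})`, where
`S = a_m tᵐ + ⋯ + a_{m-i} t^{m-i}` is the truncation of `A_{k+1}` to its top `i+1` terms. -/
theorem geom_matrix_product_second_case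
    (f : LaurentSeries Fq) (hfL : f ∈ setL Fq) (hfirr : f ∉ ratSet Fq)
    (k : ℕ) (d : ℕ → ℕ)
    (hd : ∀ n, 1 ≤ n → n ≤ k + 1 → fdeg Fq (pquot Fq f n) = ((d n : ℤ) : WithBot ℤ))
    (m : ℕ) (hm : m = d (k + 1)) (i : ℕ) (hi : i ≤ m)
    (ℓ : ℕ) (hℓ : ℓ = 2 * ∑ n ∈ Finset.Icc 1 k, d n + m + i) :
    ((List.range ℓ).map (fun j => geomMat Fq ((fareyGeom Fq)^[j] (f, 0)))).prod
      = !![(tvar Fq) ^ (m - i) * Pc Fq f (k + 1),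
             cutoff Fq ((i : ℤ) - (m : ℤ)) (pquot Fq f (k + 1)) * Pc Fq f (k + 1) + Pc Fq f k;
           (tvar Fq) ^ (m - i) * Qc Fq f (k + 1),
             cutoff Fq ((i : ℤ) - (m : ℤ)) (pquot Fq f (k + 1)) * Qc Fq f (k + 1) + Qc Fq f k] := by
  have hf0 : f ≠ 0 := fun h0 => hfirr (h0 ▸ rat_zero)
  have hford : 1 ≤ f.order := by
    have hfl := hfL
    rw [setL, Set.mem_setOf_eq, fabs, if_neg hf0] at hfl
    have hcard : (1:ℝ) < (Fintype.card Fq : ℝ) := by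
      exact_mod_cast Fintype.one_lt_card
    by_contra hc
    push_neg at hc
    have := one_le_zpow₀ (le_of_lt hcard) (by omega : (0:ℤ) ≤ -f.order)
    linarith
  have hdord : ∀ n, 1 ≤ n → n ≤ k + 1 → ((artin Fq)^[n-1] f).order = ((d n : ℤ)) := by
    intro n h1 h2
    have hgood := good_iter hfirr hford (n-1)
    exact order_from_fdeg hgood.1 hgood.2.2 (hd n h1 h2)
  obtain ⟨ho, hp⟩ := mainProd hfirr hford d k (fun n h1 h2 => hdord n h1 (by omega))
  have hgood := good_iter hfirr hford k
  have hg0 : (artin Fq)^[k] f ≠ 0 := hgood.2.1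
  have hordg : ((artin Fq)^[k] f).order = ((m : ℤ)) := by
    have h := hdord (k+1) (by omega) le_rfl
    rw [hm]
    simpa using h
  have he1 : 1 ≤ m := by
    have h2 := hgood.2.2
    rw [hordg] at h2
    exact_mod_cast h2
  set S := ∑ n ∈ Finset.Icc 1 k, d n with hS
  have hmapeq : (fun j => geomMat Fq ((fareyGeom Fq)^[2*S + j] (f,0)))
      = (fun j => geomMat Fq ((fareyGeom Fq)^[j] ((artin Fq)^[k] f, 0))) := by
    funext j
    rw [add_comm, Function.iterate_add_apply, ho]
  rw [hℓ, show 2*S + m + i = 2*S + (m + i) from by omega, List.range_add, List.map_append,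
    List.prod_append, hp, List.map_map]
  rw [show ((fun j => geomMat Fq ((fareyGeom Fq)^[j] (f,0))) ∘ (fun x => 2*S + x))
      = (fun j => geomMat Fq ((fareyGeom Fq)^[j] ((artin Fq)^[k] f, 0))) from hmapeq]
  rw [prodBlockI hg0 hordg he1 i hi]
  rw [show pquot Fq f (k+1) = polyPart Fq (((artin Fq)^[k] f)⁻¹) from rfl]
  rw [show Pc Fq f (k+1) = (convPQ Fq f (k+1)).1 from rfl,
    show Pc Fq f k = (convPQ Fq f k).1 from rfl,
    show Qc Fq f (k+1) = (convPQ Fq f (k+1)).2 from rfl,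
    show Qc Fq f k = (convPQ Fq f k).2 from rfl]
  rw [cutoff_polyPart (by omega : (i:ℤ) - m ≤ 0)]
  rw [Matrix.mul_fin_two]
  congr 1 <;> ring_nf

end
end
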